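/- arXiv:2206.10913 — 9 statements merged into one kernel-verified Lean document; each statement's English description precedes it below -/
import Mathlib

section
/- Let f ∈ ℂ[z_1,…,z_n] be a stable polynomial and let w ∈ ℝ^n, w ≠ 0. Then the initial form in_w(f) is stable. -/
open MvPolynomial

/-- A polynomial `f ∈ ℂ[z_1,…,z_n]` is stable if `f(z) ≠ 0` whenever all
imaginary parts of the coordinates of `z` are positive. -/
def Stable {σ : Type*} (f : MvPolynomial σ ℂ) : Prop :=
  ∀ z : σ → ℂ, (∀ i, 0 < (z i).im) → eval z f ≠ 0

open scoped Classical in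
/-- The initial form of `f` with respect to the functional `w`: the sum of the
terms of `f` whose exponent vectors maximize `⟨w, ·⟩` over the support of `f`. -/
noncomputable def initialForm {n : ℕ} (w : Fin n → ℝ) (f : MvPolynomial (Fin n) ℂ) :
    MvPolynomial (Fin n) ℂ :=
  ∑ α ∈ f.support.filter
      (fun α => ∀ β ∈ f.support, ∑ j, w j * (β j : ℝ) ≤ ∑ j, w j * (α j : ℝ)),
    monomial α (coeff α f)

lemma upper_infinite : {y : ℂ | 0 < y.im}.Infinite := by
  apply Set.infinite_of_injective_forall_mem (f := fun k : ℕ => ((k + 1 : ℝ) * Complex.I))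
  case hi =>
    intro a b hab
    have h2 : ((a:ℝ) + 1) = ((b:ℝ) + 1) := by
      have := congrArg Complex.im hab
      simpa using this
    have : (a:ℝ) = b := by linarith
    exact_mod_cast this
  case hf =>
    intro k
    simp [Complex.mul_im]
    positivity

lemma poly_upper_zero : ∀ {n : ℕ} (p : MvPolynomial (Fin n) ℂ),
    (∀ z : Fin n → ℂ, (∀ j, 0 < (z j).im) → eval z p = 0) → p = 0 := by
  intro n
  induction n with
  | zero =>
    intro p hp
    have h := hp (fun j => Complex.I) (fun j => j.elim0)
    have : p = C (eval (fun j => Complex.I) p) := (MvPolynomial.eq_C_of_isEmpty p).trans (by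
      rw [MvPolynomial.eq_C_of_isEmpty p]; simp)
    rw [this, h, map_zero]
  | succ n ih =>
    intro p hp
    have key : ∀ z : Fin n → ℂ, (∀ j, 0 < (z j).im) →
        Polynomial.map (eval z) (finSuccEquiv ℂ n p) = 0 := by
      intro z hz
      apply Polynomial.eq_zero_of_infinite_isRoot
      apply upper_infinite.mono
      intro y hy
      simp only [Set.mem_setOf_eq] at hy ⊢
      unfold Polynomial.IsRoot
      rw [← eval_eq_eval_mv_eval']
      apply hp
      intro j
      refine Fin.cases ?_ ?_ j
      · simpa using hy
      · intro i; simpa using hz i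
    have hcoeff : ∀ k, (finSuccEquiv ℂ n p).coeff k = 0 := by
      intro k
      apply ih
      intro z hz
      have := congrArg (fun q => Polynomial.coeff q k) (key z hz)
      simpa using this
    have : finSuccEquiv ℂ n p = 0 := Polynomial.ext fun k => by simp [hcoeff k]
    have := congrArg (finSuccEquiv ℂ n).symm this
    simpa using this

lemma minmod {h : ℂ → ℂ} {s δ : ℝ} (hs : 0 < s)
    (hd : DifferentiableOn ℂ h (Metric.closedBall 0 s))
    (hnz : ∀ u ∈ Metric.closedBall (0:ℂ) s, h u ≠ 0)
    (hδ : 0 < δ) (hlow : ∀ u ∈ Metric.sphere (0:ℂ) s, δ ≤ ‖h u‖) :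
    δ ≤ ‖h 0‖ := by
  have hcl : closure (Metric.ball (0:ℂ) s) = Metric.closedBall 0 s := closure_ball 0 hs.ne'
  have hfr : frontier (Metric.ball (0:ℂ) s) = Metric.sphere 0 s := frontier_ball 0 hs.ne'
  have hinv : DifferentiableOn ℂ (fun u => (h u)⁻¹) (Metric.closedBall 0 s) :=
    hd.inv hnz
  have hdiff : DiffContOnCl ℂ (fun u => (h u)⁻¹) (Metric.ball (0:ℂ) s) :=
    DifferentiableOn.diffContOnCl (by rwa [hcl])
  have hbound : ∀ u ∈ frontier (Metric.ball (0:ℂ) s), ‖(fun u => (h u)⁻¹) u‖ ≤ δ⁻¹ := by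
    intro u hu
    rw [hfr] at hu
    simp only [norm_inv]
    exact inv_anti₀ hδ (hlow u hu)
  have hz0 : (0:ℂ) ∈ closure (Metric.ball (0:ℂ) s) := by
    rw [hcl]; exact Metric.mem_closedBall_self hs.le
  have key : ‖(h 0)⁻¹‖ ≤ δ⁻¹ :=
    Complex.norm_le_of_forall_mem_frontier_norm_le Metric.isBounded_ball hdiff hbound hz0
  have h0 : h 0 ≠ 0 := hnz 0 (Metric.mem_closedBall_self hs.le)
  rw [norm_inv] at key
  have : (0:ℝ) < ‖h 0‖ := norm_pos_iff.mpr h0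
  calc δ = (δ⁻¹)⁻¹ := (inv_inv δ).symm
    _ ≤ (‖h 0‖⁻¹)⁻¹ := inv_anti₀ (by positivity) key
    _ = ‖h 0‖ := inv_inv _

lemma rpow_finset_sum {ι : Type*} (t : ℝ) (ht : 0 < t) (s : Finset ι) (e : ι → ℝ) :
    t ^ (∑ i ∈ s, e i) = ∏ i ∈ s, t ^ (e i) := by
  classical
  induction s using Finset.cons_induction with
  | empty => simp
  | cons a s ha ih =>
    rw [Finset.sum_cons, Finset.prod_cons, Real.rpow_add ht, ih]

/-- If `f` is stable and `w ≠ 0`, then the initial form `in_w(f)` is stable. -/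
theorem stable_initialForm {n : ℕ} (f : MvPolynomial (Fin n) ℂ) (w : Fin n → ℝ)
    (hf : Stable f) (hw : w ≠ 0) : Stable (initialForm w f) := by
  classical
  -- n is positive
  rcases Nat.eq_zero_or_pos n with rfl | hn
  · exact absurd (funext fun j => j.elim0) hw
  have huniv : (Finset.univ : Finset (Fin n)).Nonempty := ⟨⟨0, hn⟩, Finset.mem_univ _⟩
  intro z hz h0
  set p := initialForm w f with hp
  set L : (Fin n →₀ ℕ) → ℝ := fun α => ∑ j, w j * (α j : ℝ) with hL
  set cond : (Fin n →₀ ℕ) → Prop := fun α => ∀ β ∈ f.support, L β ≤ L α with hcond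
  set T : Finset (Fin n →₀ ℕ) := f.support.filter cond with hT
  have hpT : p = ∑ α ∈ T, monomial α (coeff α f) := by
    rw [hp, initialForm, hT]
  -- f ≠ 0
  have hf0 : f ≠ 0 := by
    intro h
    exact hf (fun _ => Complex.I) (fun i => by simp) (by rw [h, map_zero])
  have hS : f.support.Nonempty :=
    Finset.nonempty_iff_ne_empty.mpr (fun h => hf0 (MvPolynomial.support_eq_empty.mp h))
  obtain ⟨α₀, hα₀S, hα₀max⟩ := Finset.exists_max_image f.support L hS
  set m : ℝ := L α₀ with hm
  have hα₀T : α₀ ∈ T := Finset.mem_filter.mpr ⟨hα₀S, hα₀max⟩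
  have hTm : ∀ α ∈ T, L α = m := by
    intro α hα
    rcases Finset.mem_filter.mp hα with ⟨hαS, hαc⟩
    exact le_antisymm (hα₀max α hαS) (hαc α₀ hα₀S)
  have hTS : ∀ α ∈ T, α ∈ f.support := fun α hα => (Finset.mem_filter.mp hα).1
  -- coefficients of p
  have hcoeffp : ∀ γ, coeff γ p = if γ ∈ T then coeff γ f else 0 := by
    intro γ
    rw [hpT, MvPolynomial.coeff_sum]
    rw [Finset.sum_congr rfl (fun α _ => MvPolynomial.coeff_monomial γ α (coeff α f))]
    exact Finset.sum_ite_eq' T γ (fun α => coeff α f)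
  have hpne : p ≠ 0 := by
    intro h
    have := hcoeffp α₀
    rw [h] at this
    simp only [MvPolynomial.coeff_zero, hα₀T, if_true] at this
    exact (MvPolynomial.mem_support_iff.mp (hTS α₀ hα₀T)) this.symm
  -- eval formula for p
  have hevalp : ∀ y : Fin n → ℂ, eval y p = ∑ α ∈ T, coeff α f * ∏ j, (y j) ^ (α j) := by
    intro y
    rw [hpT, map_sum]
    refine Finset.sum_congr rfl fun α _ => ?_
    rw [MvPolynomial.eval_monomial]
    congr 1
    exact Finsupp.prod_fintype α (fun j e => y j ^ e) (fun j => pow_zero _)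
  -- a point in the upper half-space where p does not vanish
  have hz1 : ∃ z1 : Fin n → ℂ, (∀ j, 0 < (z1 j).im) ∧ eval z1 p ≠ 0 := by
    by_contra hc
    push_neg at hc
    exact hpne (poly_upper_zero p hc)
  obtain ⟨z1, hz1im, hz1ne⟩ := hz1
  set v : Fin n → ℂ := fun j => z1 j - z j with hv
  -- the univariate polynomial Q
  set Q : Polynomial ℂ :=
    MvPolynomial.aeval (fun j => Polynomial.C (z j) + Polynomial.C (v j) * Polynomial.X) p with hQ
  have hQeval : ∀ u : ℂ, Q.eval u = eval (fun j => z j + u * v j) p := by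
    intro u
    have hcomp := MvPolynomial.comp_aeval
      (fun j => Polynomial.C (z j) + Polynomial.C (v j) * Polynomial.X)
      (Polynomial.aeval u (R := ℂ))
    have := congrFun (congrArg (fun (φ : MvPolynomial (Fin n) ℂ →ₐ[ℂ] ℂ) => (φ : MvPolynomial (Fin n) ℂ → ℂ)) hcomp) p
    simp only [AlgHom.coe_comp, Function.comp_apply] at this
    rw [hQ]
    have haev : ∀ (q : Polynomial ℂ), Polynomial.aeval u q = q.eval u := by
      intro q; simp
    rw [← haev, this]
    have : (fun j => Polynomial.aeval u (Polynomial.C (z j) + Polynomial.C (v j) * Polynomial.X))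
        = fun j => z j + u * v j := by
      funext j
      simp only [map_add, map_mul, Polynomial.aeval_C, Polynomial.aeval_X,
        Algebra.algebraMap_self, RingHom.id_apply]
      ring
    rw [this]
    simp [MvPolynomial.aeval_def]
  set q : ℂ → ℂ := fun u => Q.eval u with hq
  have hq0 : q 0 = 0 := by
    rw [hq]
    simp only
    rw [hQeval]
    have h1 : (fun j => z j + (0:ℂ) * v j) = z := by funext j; simp
    rw [h1]; exact h0
  have hq1 : q 1 ≠ 0 := by
    rw [hq]
    simp only
    rw [hQeval]
    have h1 : (fun j => z j + (1:ℂ) * v j) = z1 := by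
      funext j; simp only [hv, one_mul]; ring
    rw [h1]; exact hz1ne
  have hQne : Q ≠ 0 := by
    intro h
    apply hq1
    rw [hq]
    simp only [h, Polynomial.eval_zero]
  -- geometry: epsilon
  set c : ℝ := Finset.univ.inf' huniv (fun j => (z j).im) with hc
  have hcpos : 0 < c := (Finset.lt_inf'_iff huniv).mpr (fun j _ => hz j)
  set M : ℝ := Finset.univ.sup' huniv (fun j => ‖v j‖) with hM
  have hM0 : 0 ≤ M := by
    rw [hM]
    exact le_trans (norm_nonneg (v ⟨0, hn⟩))
      (Finset.le_sup' (fun j => ‖v j‖) (Finset.mem_univ (⟨0, hn⟩ : Fin n)))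
  set ε : ℝ := c / (M + 1) with hε
  have hεpos : 0 < ε := div_pos hcpos (by linarith)
  have hεM : ε * M < c := by
    rw [hε, div_mul_eq_mul_div, div_lt_iff₀ (by linarith : (0:ℝ) < M + 1)]
    nlinarith
  have him : ∀ u : ℂ, ‖u‖ ≤ ε → ∀ j, 0 < (z j + u * v j).im := by
    intro u hu j
    have h1 : c ≤ (z j).im := by
      rw [hc]; exact Finset.inf'_le _ (Finset.mem_univ j)
    have h2 : |(u * v j).im| ≤ ‖u * v j‖ := by
      exact Complex.abs_im_le_norm _
    have h3 : ‖u * v j‖ ≤ ε * M := by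
      rw [norm_mul]
      have : ‖v j‖ ≤ M := by
        rw [hM]; exact Finset.le_sup' (fun j => ‖v j‖) (Finset.mem_univ j)
      exact mul_le_mul hu this (norm_nonneg _) hεpos.le
    rw [Complex.add_im]
    have := abs_le.mp (h2.trans h3)
    linarith
  -- choose radius s avoiding root moduli
  set B : Finset ℝ := Q.roots.toFinset.image (fun ρ => ‖ρ‖) with hB
  have hsne : (Set.Ioo (0:ℝ) ε \ ↑B).Nonempty :=
    ((Set.Ioo_infinite hεpos).diff B.finite_toSet).nonempty
  obtain ⟨s, hsIoo, hsB⟩ := hsne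
  obtain ⟨hs0, hsε⟩ := hsIoo
  -- minimum of ‖q‖ on the sphere
  have hsphne : (Metric.sphere (0:ℂ) s).Nonempty := NormedSpace.sphere_nonempty.mpr hs0.le
  obtain ⟨u₀, hu₀sph, hu₀min⟩ := (isCompact_sphere (0:ℂ) s).exists_isMinOn hsphne
    ((Q.continuous.norm).continuousOn : ContinuousOn (fun u => ‖q u‖) _)
  set δ : ℝ := ‖q u₀‖ with hδ
  have hδpos : 0 < δ := by
    rw [hδ, norm_pos_iff]
    intro hroot
    apply hsB
    rw [hB]
    simp only [Finset.coe_image, Set.mem_image, Finset.mem_coe, Multiset.mem_toFinset]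
    refine ⟨u₀, ?_, ?_⟩
    · rw [Polynomial.mem_roots hQne]
      exact hroot
    · simpa using hu₀sph
  have hmin : ∀ u ∈ Metric.sphere (0:ℂ) s, δ ≤ ‖q u‖ := fun u hu => hu₀min hu
  -- pieces
  set P : (Fin n →₀ ℕ) → ℂ → ℂ :=
    fun α u => coeff α f * ∏ j, (z j + u * v j) ^ (α j) with hP
  have hqP : ∀ u, q u = ∑ α ∈ T, P α u := by
    intro u
    rw [hq]
    simp only
    rw [hQeval, hevalp]
  -- the scaled family
  set g : ℝ → ℂ → ℂ :=
    fun t u => ∑ α ∈ f.support, (((t ^ (L α - m) : ℝ)) : ℂ) * P α u with hg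
  -- eval identity
  have hgeval : ∀ t : ℝ, 0 < t → ∀ u : ℂ,
      eval (fun j => ((t ^ (w j) : ℝ) : ℂ) * (z j + u * v j)) f
        = ((t ^ m : ℝ) : ℂ) * g t u := by
    intro t ht u
    rw [MvPolynomial.eval_eq', hg]
    rw [Finset.mul_sum]
    refine Finset.sum_congr rfl fun α hα => ?_
    have hprod : ∏ j, (((t ^ (w j) : ℝ) : ℂ) * (z j + u * v j)) ^ (α j)
        = ((t ^ (L α) : ℝ) : ℂ) * ∏ j, (z j + u * v j) ^ (α j) := by
      rw [Finset.prod_congr rfl (fun j _ => mul_pow _ _ _), Finset.prod_mul_distrib]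
      congr 1
      have : ∀ j : Fin n, ((t ^ (w j) : ℝ) : ℂ) ^ (α j) = (((t ^ (w j)) ^ (α j) : ℝ) : ℂ) := by
        intro j; push_cast; ring
      rw [Finset.prod_congr rfl (fun j _ => this j), ← Complex.ofReal_prod]
      congr 1
      have : ∀ j : Fin n, (t ^ (w j)) ^ (α j) = t ^ (w j * (α j : ℝ)) := by
        intro j
        rw [← Real.rpow_natCast (t ^ (w j)) (α j), ← Real.rpow_mul ht.le]
      rw [Finset.prod_congr rfl (fun j _ => this j), ← rpow_finset_sum t ht]
    rw [hprod, hP]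
    have hsplit : ((t ^ m : ℝ) : ℂ) * (((t ^ (L α - m) : ℝ)) : ℂ)
        = ((t ^ (L α) : ℝ) : ℂ) := by
      rw [← Complex.ofReal_mul, ← Real.rpow_add ht]
      norm_num
    rw [← hsplit]
    ring
  -- nonvanishing of g
  have hgne : ∀ t : ℝ, 0 < t → ∀ u : ℂ, ‖u‖ ≤ ε → g t u ≠ 0 := by
    intro t ht u hu hgz
    have hpt : ∀ j, 0 < ((((t ^ (w j) : ℝ)) : ℂ) * (z j + u * v j)).im := by
      intro j
      have h1 : ((((t ^ (w j) : ℝ)) : ℂ) * (z j + u * v j)).im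
          = (t ^ (w j) : ℝ) * (z j + u * v j).im := by
        simp [Complex.mul_im]
      rw [h1]
      exact mul_pos (Real.rpow_pos_of_pos ht _) (him u hu j)
    have := hf _ hpt
    rw [hgeval t ht u, hgz, mul_zero] at this
    exact this rfl
  -- decomposition g = q + R
  set Sc : Finset (Fin n →₀ ℕ) := f.support.filter (fun α => ¬ cond α) with hSc
  set R : ℝ → ℂ → ℂ :=
    fun t u => ∑ α ∈ Sc, (((t ^ (L α - m) : ℝ)) : ℂ) * P α u with hR
  have hdecomp : ∀ t : ℝ, 0 < t → ∀ u, g t u = q u + R t u := by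
    intro t ht u
    rw [hg, hR, hqP]
    simp only
    rw [← Finset.sum_filter_add_sum_filter_not f.support cond
      (fun α => (((t ^ (L α - m) : ℝ)) : ℂ) * P α u)]
    congr 1
    refine Finset.sum_congr rfl fun α hα => ?_
    rw [hTm α hα]
    norm_num
  -- strict maximality off T
  have hlt : ∀ α ∈ Sc, L α < m := by
    intro α hα
    obtain ⟨hαS, hαc⟩ := Finset.mem_filter.mp hα
    have hαc' : ∃ β ∈ f.support, L α < L β := by
      by_contra hno
      push_neg at hno
      exact hαc (fun β hβ => hno β hβ)
    obtain ⟨β, hβS, hβgt⟩ := hαc'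
    exact lt_of_lt_of_le hβgt (hα₀max β hβS)
  -- uniform bound for R
  set K : (Fin n →₀ ℕ) → ℝ :=
    fun α => ‖coeff α f‖ * ∏ j, (‖z j‖ + s * ‖v j‖) ^ (α j) with hK
  have hRbound : ∀ t : ℝ, 0 < t → ∀ u : ℂ, ‖u‖ ≤ s →
      ‖R t u‖ ≤ ∑ α ∈ Sc, (t ^ (L α - m)) * K α := by
    intro t ht u hu
    rw [hR]
    refine (norm_sum_le _ _).trans ?_
    refine Finset.sum_le_sum fun α hα => ?_
    simp only [hP, hK, norm_mul, Complex.norm_real, Real.norm_eq_abs,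
      abs_of_pos (Real.rpow_pos_of_pos ht (L α - m))]
    refine mul_le_mul_of_nonneg_left ?_ (Real.rpow_pos_of_pos ht _).le
    refine mul_le_mul_of_nonneg_left ?_ (norm_nonneg _)
    rw [norm_prod]
    refine Finset.prod_le_prod (fun j _ => by positivity) fun j _ => ?_
    rw [norm_pow]
    refine pow_le_pow_left₀ (norm_nonneg _) ?_ _
    refine (norm_add_le _ _).trans ?_
    rw [norm_mul]
    gcongr
  -- the bound tends to zero
  have htend : Filter.Tendsto (fun t : ℝ => ∑ α ∈ Sc, (t ^ (L α - m)) * K α)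
      Filter.atTop (nhds 0) := by
    have : (0:ℝ) = ∑ α ∈ Sc, (0:ℝ) * K α := by simp
    rw [this]
    refine tendsto_finset_sum Sc fun α hα => ?_
    refine Filter.Tendsto.mul_const (K α) ?_
    have h1 : 0 < m - L α := sub_pos.mpr (hlt α hα)
    have := tendsto_rpow_neg_atTop h1
    convert this using 2 with t
    ring_nf
  -- choose t
  obtain ⟨t, htlt, ht0⟩ := ((htend.eventually_lt_const (half_pos hδpos)).and
    (Filter.eventually_gt_atTop (0:ℝ))).exists
  -- differentiability
  have hgdiff : Differentiable ℂ (g t) := by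
    rw [hg]
    refine Differentiable.fun_sum fun α _ => ?_
    refine Differentiable.const_mul ?_ _
    rw [hP]
    refine Differentiable.const_mul ?_ _
    refine Differentiable.fun_finsetProd fun j _ => ?_
    exact ((differentiable_const (z j)).add (differentiable_id.mul_const (v j))).pow _
  -- apply minmod
  have hsε' : s ≤ ε := hsε.le
  have hnz : ∀ u ∈ Metric.closedBall (0:ℂ) s, g t u ≠ 0 := by
    intro u hu
    rw [Metric.mem_closedBall, dist_zero_right] at hu
    exact hgne t ht0 u (hu.trans hsε')
  have hlow : ∀ u ∈ Metric.sphere (0:ℂ) s, δ / 2 ≤ ‖g t u‖ := by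
    intro u hu
    have husn : ‖u‖ = s := by simpa using hu
    have h1 : δ ≤ ‖q u‖ := hmin u hu
    have h2 : ‖R t u‖ ≤ ∑ α ∈ Sc, (t ^ (L α - m)) * K α := hRbound t ht0 u husn.le
    have h3 : ‖R t u‖ < δ / 2 := lt_of_le_of_lt h2 htlt
    have h4 : ‖q u‖ ≤ ‖q u + R t u‖ + ‖R t u‖ := by
      calc ‖q u‖ = ‖(q u + R t u) - R t u‖ := by congr 1; ring
        _ ≤ ‖q u + R t u‖ + ‖R t u‖ := norm_sub_le _ _
    rw [hdecomp t ht0 u]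
    linarith
  have hfinal : δ / 2 ≤ ‖g t 0‖ :=
    minmod hs0 hgdiff.differentiableOn hnz (half_pos hδpos) hlow
  have hg0 : ‖g t 0‖ < δ / 2 := by
    rw [hdecomp t ht0 0, hq0, zero_add]
    exact lt_of_le_of_lt (hRbound t ht0 0 (by simp [hs0.le])) htlt
  linarith
end

section
/- Let K ⊆ ℝ^n be a closed convex cone, let f ∈ ℂ[z_1,…,z_n] be K-stable, let a ∈ ℂ^n and v^(1), …, v^(k) ∈ ℝ^n. Set K' = pos{v^(1),…,v^(k)}, the cone of non-negative combinations of v^(1),…,v^(k), and assume Im(a) + K' ⊆ K. Then the polynomial g ∈ ℂ[z_1,…,z_k] defined by g(z_1,…,z_k) = f(a + Σ_{j=1}^k z_j v^(j)) is stable or the zero polynomial. -/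
set_option maxRecDepth 8000


open MvPolynomial

/-- Key geometric fact: a convex combination (with positive weight on the interior point)
of a point of `K` and a point of the intrinsic interior of `K` lies in the intrinsic
interior of `K`. -/
lemma combo_mem_intrinsicInterior {E : Type*} [NormedAddCommGroup E] [NormedSpace ℝ E]
    {K : Set E} (hK : Convex ℝ K) {x u : E} (hx : x ∈ K) (hu : u ∈ intrinsicInterior ℝ K)
    {s : ℝ} (hs0 : 0 < s) (hs1 : s ≤ 1) : s • u + (1 - s) • x ∈ intrinsicInterior ℝ K := by
  obtain ⟨u', hu', huc⟩ := mem_intrinsicInterior.mp hu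
  obtain ⟨ε, hε, hball⟩ := Metric.mem_nhds_iff.mp (mem_interior_iff_mem_nhds.mp hu')
  have huSpan : u ∈ affineSpan ℝ K := huc ▸ u'.2
  have hxSpan : x ∈ affineSpan ℝ K := subset_affineSpan ℝ K hx
  have hySpan : s • u + (1 - s) • x ∈ affineSpan ℝ K := by
    have h := AffineSubspace.smul_vsub_vadd_mem (affineSpan ℝ K) s huSpan hxSpan hxSpan
    simp only [vsub_eq_sub, vadd_eq_add] at h
    convert h using 1
    module
  refine mem_intrinsicInterior.mpr ⟨⟨_, hySpan⟩, ?_, rfl⟩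
  rw [mem_interior]
  refine ⟨Metric.ball ⟨_, hySpan⟩ (s * ε), ?_, Metric.isOpen_ball,
    Metric.mem_ball_self (by positivity)⟩
  rintro ⟨p, hpSpan⟩ hp
  have hdist : ‖p - (s • u + (1 - s) • x)‖ < s * ε := by
    simpa [Subtype.dist_eq, dist_eq_norm] using hp
  set y := s • u + (1 - s) • x with hy
  set p' := u + s⁻¹ • (p - y) with hp'def
  have hp'Span : p' ∈ affineSpan ℝ K := by
    have h := AffineSubspace.smul_vsub_vadd_mem (affineSpan ℝ K) s⁻¹ hpSpan hySpan huSpan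
    simp only [vsub_eq_sub, vadd_eq_add] at h
    convert h using 1
    module
  have hp'K : p' ∈ K := by
    refine hball (show (⟨p', hp'Span⟩ : affineSpan ℝ K) ∈ Metric.ball u' ε from ?_)
    have : dist (⟨p', hp'Span⟩ : affineSpan ℝ K) u' = ‖p' - u‖ := by
      rw [Subtype.dist_eq, dist_eq_norm, huc]
    rw [Metric.mem_ball, this, hp'def, add_sub_cancel_left, norm_smul]
    rw [norm_inv, Real.norm_eq_abs, abs_of_pos hs0]
    calc s⁻¹ * ‖p - y‖ < s⁻¹ * (s * ε) := by
          apply mul_lt_mul_of_pos_left hdist (by positivity)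
      _ = ε := by field_simp
  have hpeq : p = s • p' + (1 - s) • x := by
    rw [hp'def, smul_add, smul_smul, mul_inv_cancel₀ hs0.ne', one_smul, hy]
    module
  show p ∈ K
  rw [hpeq]
  exact hK hp'K hx hs0.le (by linarith) (by ring)

/-- Evaluation commutes with substitution for multivariate polynomials. -/
lemma mv_eval_aeval {σ τ : Type*} (φ : σ → MvPolynomial τ ℂ) (p : MvPolynomial σ ℂ)
    (x : τ → ℂ) : eval x (aeval φ p) = eval (fun i => eval x (φ i)) p := by
  induction p using MvPolynomial.induction_on with
  | C a => simp
  | add p q hp hq => simp only [map_add, hp, hq]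
  | mul_X p i hp => simp only [map_mul, aeval_X, eval_mul, eval_X, hp]

/-- Evaluation commutes with substitution into univariate polynomials. -/
lemma poly_eval_mv_aeval {σ : Type*} (ψ : σ → Polynomial ℂ) (p : MvPolynomial σ ℂ)
    (t : ℂ) : Polynomial.eval t (MvPolynomial.aeval ψ p) =
      eval (fun j => Polynomial.eval t (ψ j)) p := by
  induction p using MvPolynomial.induction_on with
  | C a => simp [Polynomial.algebraMap_eq]
  | add p q hp hq => simp only [map_add, Polynomial.eval_add, hp, hq]
  | mul_X p i hp => simp only [map_mul, aeval_X, Polynomial.eval_mul, eval_mul, eval_X, hp]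

lemma differentiable_mv_eval {n : ℕ} (f : MvPolynomial (Fin n) ℂ) (ζ : ℂ → Fin n → ℂ)
    (hζ : ∀ i, Differentiable ℂ (fun t => ζ t i)) :
    Differentiable ℂ fun t => eval (ζ t) f := by
  induction f using MvPolynomial.induction_on with
  | C a => simpa using differentiable_const a
  | add p q hp hq => simpa only [map_add] using hp.fun_add hq
  | mul_X p i hp => simpa only [map_mul, eval_mul, eval_X] using hp.fun_mul (hζ i)


/-- A polynomial `f ∈ ℂ[z_1,…,z_n]` is `K`-stable if `f(z) ≠ 0` whenever the
vector of imaginary parts of `z` lies in the relative interior of `K`. -/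
def KStable {n : ℕ} (K : Set (Fin n → ℝ)) (f : MvPolynomial (Fin n) ℂ) : Prop :=
  ∀ z : Fin n → ℂ, (fun i => (z i).im) ∈ intrinsicInterior ℝ K → eval z f ≠ 0

/-- Let `f` be `K`-stable, `a ∈ ℂ^n`, `v^(1), …, v^(k) ∈ ℝ^n`, and assume
`Im(a) + pos{v^(1),…,v^(k)} ⊆ K`. Then `g(z_1,…,z_k) = f(a + Σ_j z_j v^(j))`
is stable or the zero polynomial. -/
theorem substitution_stable {n k : ℕ} (K : Set (Fin n → ℝ))
    (hKcl : IsClosed K) (hKconv : Convex ℝ K)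
    (hKcone : ∀ c : ℝ, 0 ≤ c → ∀ x ∈ K, c • x ∈ K)
    (f : MvPolynomial (Fin n) ℂ) (hf : KStable K f)
    (a : Fin n → ℂ) (v : Fin k → Fin n → ℝ)
    (hsub : ∀ c : Fin k → ℝ, (∀ j, 0 ≤ c j) →
      (fun i => (a i).im + ∑ j, c j * v j i) ∈ K)
    (g : MvPolynomial (Fin k) ℂ)
    (hg : g = aeval (fun i : Fin n => C (a i) + ∑ j, C ((v j i : ℝ) : ℂ) * X j) f) :
    Stable g ∨ g = 0 := by
  by_cases hg0 : g = 0
  · exact Or.inr hg0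
  refine Or.inl ?_
  intro z₀ him hzero
  -- a point of the intrinsic interior of K
  have h0K : (fun i => (a i).im) ∈ K := by
    simpa using hsub (fun _ => 0) (fun _ => le_rfl)
  obtain ⟨u, hu⟩ := Set.Nonempty.intrinsicInterior hKconv ⟨_, h0K⟩
  -- a point where g does not vanish
  have hex : ∃ w : Fin k → ℂ, eval w g ≠ 0 := by
    by_contra h
    push_neg at h
    exact hg0 (MvPolynomial.funext (fun x => by simp [h x]))
  obtain ⟨w, hw⟩ := hex
  set Δ : Fin k → ℂ := fun j => w j - z₀ j with hΔ
  set zf : ℂ → Fin k → ℂ := fun t j => z₀ j + t * Δ j with hzf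
  -- the univariate polynomial obtained by restricting g to the line z₀ + t(w - z₀)
  set qp : Polynomial ℂ :=
    MvPolynomial.aeval (fun j => Polynomial.C (z₀ j) + Polynomial.X * Polynomial.C (Δ j)) g
    with hqp
  have hqp_eval : ∀ t : ℂ, qp.eval t = eval (zf t) g := by
    intro t
    have hpt : (fun j => Polynomial.eval t
        (Polynomial.C (z₀ j) + Polynomial.X * Polynomial.C (Δ j))) = zf t := by
      funext j
      show Polynomial.eval t _ = z₀ j + t * Δ j
      rw [Polynomial.eval_add, Polynomial.eval_C, Polynomial.eval_mul, Polynomial.eval_X,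
        Polynomial.eval_C]
    rw [hqp, poly_eval_mv_aeval, hpt]
  have hzf1 : zf 1 = w := by funext j; simp [hzf, hΔ]
  have hq1 : qp.eval 1 ≠ 0 := by rw [hqp_eval, hzf1]; exact hw
  have hqp0 : qp ≠ 0 := fun h => hq1 (by simp [h])
  have hzf0 : zf 0 = z₀ := by funext j; simp [hzf]
  have hq0 : qp.eval 0 = 0 := by rw [hqp_eval, hzf0]; exact hzero
  -- choice of the radius r
  have hUopen : IsOpen {t : ℂ | ∀ j, 0 < (zf t j).im} := by
    rw [Set.setOf_forall]
    refine isOpen_iInter_of_finite fun j => isOpen_lt continuous_const ?_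
    exact Complex.continuous_im.comp (continuous_const.add (continuous_id.mul continuous_const))
  have h0U : (0 : ℂ) ∈ {t : ℂ | ∀ j, 0 < (zf t j).im} := by
    intro j; simpa [hzf] using him j
  obtain ⟨r₁, hr₁, hball₁⟩ := Metric.isOpen_iff.mp hUopen 0 h0U
  have hroots : ∃ r₂ > 0, ∀ x : ℂ, x ∈ qp.roots → x ≠ 0 → r₂ ≤ ‖x‖ := by
    rcases (qp.roots.toFinset.erase 0).eq_empty_or_nonempty with hSe | hSne
    · refine ⟨1, one_pos, fun x hx hxne => ?_⟩
      exfalso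
      have hmem : x ∈ qp.roots.toFinset.erase 0 :=
        Finset.mem_erase.mpr ⟨hxne, Multiset.mem_toFinset.mpr hx⟩
      rw [hSe] at hmem
      exact Finset.notMem_empty x hmem
    · refine ⟨(qp.roots.toFinset.erase 0).inf' hSne (fun x => ‖x‖), ?_, fun x hx hxne => ?_⟩
      · show (0:ℝ) < _
        rw [Finset.lt_inf'_iff]
        intro y hyS
        exact norm_pos_iff.mpr (Finset.mem_erase.mp hyS).1
      · exact Finset.inf'_le _ (Finset.mem_erase.mpr ⟨hxne, Multiset.mem_toFinset.mpr hx⟩)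
  obtain ⟨r₂, hr₂, hroots⟩ := hroots
  set r : ℝ := min (r₁ / 2) (r₂ / 2) with hrdef
  have hr : 0 < r := lt_min (by linarith) (by linarith)
  have hrim : ∀ t : ℂ, ‖t‖ ≤ r → ∀ j, 0 < (zf t j).im := by
    intro t ht j
    refine hball₁ ?_ j
    rw [Metric.mem_ball, dist_zero_right]
    calc ‖t‖ ≤ r := ht
      _ ≤ r₁ / 2 := min_le_left _ _
      _ < r₁ := by linarith
  have hsphere : ∀ t : ℂ, ‖t‖ = r → qp.eval t ≠ 0 := by
    intro t ht h0
    have htr : t ∈ qp.roots := by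
      rw [Polynomial.mem_roots hqp0]
      exact h0
    have htne : t ≠ 0 := by
      intro h
      rw [h, norm_zero] at ht
      exact hr.ne ht
    have h1 := hroots t htr htne
    have h2 : r ≤ r₂ / 2 := min_le_right _ _
    rw [ht] at h1
    linarith
  -- the minimum m of |qp| on the sphere of radius r
  have hsph_ne : (Metric.sphere (0 : ℂ) r).Nonempty := NormedSpace.sphere_nonempty.mpr hr.le
  obtain ⟨t₀, ht₀, hmin⟩ := (isCompact_sphere (0 : ℂ) r).exists_isMinOn hsph_ne
    ((qp.continuous).norm.continuousOn)
  set m : ℝ := ‖qp.eval t₀‖ with hm_def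
  have ht₀n : ‖t₀‖ = r := by simpa [mem_sphere_iff_norm] using ht₀
  have hm : 0 < m := norm_pos_iff.mpr (hsphere t₀ ht₀n)
  have hmle : ∀ t : ℂ, ‖t‖ = r → m ≤ ‖qp.eval t‖ := by
    intro t ht
    exact hmin (by simpa [mem_sphere_iff_norm] using ht)
  -- the two-parameter family
  set d : Fin n → ℝ := fun i => u i - (a i).im with hd
  set ζ : ℝ → ℂ → Fin n → ℂ := fun s t i =>
    a i + (s : ℂ) * Complex.I * (d i : ℂ) + ∑ j, zf t j * ((v j i : ℝ) : ℂ) with hζ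
  set F : ℝ × ℂ → ℂ := fun p => eval (ζ p.1 p.2) f with hF
  have hF0 : ∀ t : ℂ, F (0, t) = qp.eval t := by
    intro t
    have hpt : ζ 0 t = (fun i =>
        eval (zf t) (C (a i) + ∑ j, C ((v j i : ℝ) : ℂ) * X j)) := by
      funext i
      show a i + ((0:ℝ) : ℂ) * Complex.I * ((d i : ℝ) : ℂ) + ∑ j, zf t j * ((v j i : ℝ) : ℂ) = _
      simp [mul_comm]
    simp only [hF]
    rw [hqp_eval, hg, mv_eval_aeval, hpt]
  have hFim : ∀ (s : ℝ) (t : ℂ) (i : Fin n),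
      (ζ s t i).im = (a i).im + s * d i + ∑ j, (zf t j).im * v j i := by
    intro s t i
    simp [hζ, Complex.add_im, Complex.mul_im, Complex.im_sum]
  have hFne : ∀ s : ℝ, 0 < s → s < 1 → ∀ t : ℂ, ‖t‖ ≤ r → F (s, t) ≠ 0 := by
    intro s hs0 hs1 t ht
    refine hf _ ?_
    have h1s : (1 : ℝ) - s ≠ 0 := by linarith
    set xt : Fin n → ℝ := fun i => (a i).im + ∑ j, ((zf t j).im / (1 - s)) * v j i with hxt
    have hxtK : xt ∈ K := hsub _ (fun j => div_nonneg (hrim t ht j).le (by linarith))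
    have heq : (fun i => ((ζ s t i)).im) = s • u + (1 - s) • xt := by
      funext i
      rw [hFim]
      simp only [Pi.add_apply, Pi.smul_apply, smul_eq_mul, hxt, hd]
      have hterm : ∀ j ∈ Finset.univ, (1 - s) * ((zf t j).im / (1 - s) * v j i)
          = (zf t j).im * v j i := by
        intro j _
        field_simp
      rw [mul_add, Finset.mul_sum, Finset.sum_congr rfl hterm]
      ring
    rw [heq]
    exact combo_mem_intrinsicInterior hKconv hxtK hu hs0 hs1.le
  -- continuity of F and choice of s
  have hζcont : Continuous fun p : ℝ × ℂ => ζ p.1 p.2 := by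
    refine continuous_pi fun i => ?_
    refine Continuous.add (Continuous.add continuous_const ?_) ?_
    · exact ((Complex.continuous_ofReal.comp continuous_fst).mul continuous_const).mul
        continuous_const
    · refine continuous_finset_sum _ fun j _ => ?_
      exact (continuous_const.add (continuous_snd.mul continuous_const)).mul continuous_const
  have hFcont : Continuous F := (MvPolynomial.continuous_eval (p := f)).comp hζcont
  have hcomp : IsCompact ((Set.Icc (0 : ℝ) 1) ×ˢ Metric.closedBall (0 : ℂ) r) :=
    isCompact_Icc.prod (isCompact_closedBall _ _)
  have huc := hcomp.uniformContinuousOn_of_continuous hFcont.continuousOn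
  rw [Metric.uniformContinuousOn_iff] at huc
  obtain ⟨δ, hδ, hclose⟩ := huc (m / 3) (by positivity)
  set s : ℝ := min (δ / 2) (2⁻¹ : ℝ) with hs_def
  have hs0 : 0 < s := lt_min (by linarith) (by norm_num)
  have hs1 : s < 1 := lt_of_le_of_lt (min_le_right _ _) (by norm_num)
  have hdiff : ∀ t ∈ Metric.closedBall (0 : ℂ) r, ‖F (s, t) - F (0, t)‖ < m / 3 := by
    intro t ht
    have h1 : (s, t) ∈ (Set.Icc (0 : ℝ) 1) ×ˢ Metric.closedBall (0 : ℂ) r :=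
      ⟨⟨hs0.le, hs1.le⟩, ht⟩
    have h2 : ((0 : ℝ), t) ∈ (Set.Icc (0 : ℝ) 1) ×ˢ Metric.closedBall (0 : ℂ) r :=
      ⟨⟨le_rfl, zero_le_one⟩, ht⟩
    have hdlt : dist (s, t) ((0 : ℝ), t) < δ := by
      rw [Prod.dist_eq]
      simp only [dist_self]
      rw [Real.dist_eq, sub_zero, abs_of_pos hs0]
      have : s ≤ δ / 2 := min_le_left _ _
      calc max s 0 = s := max_eq_left hs0.le
        _ < δ := by linarith
    have := hclose _ h1 _ h2 hdlt
    rwa [dist_eq_norm] at this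
  -- nonvanishing of F (s, ·) on the closed ball
  have hQne : ∀ t ∈ Metric.closedBall (0 : ℂ) r, F (s, t) ≠ 0 := by
    intro t ht
    exact hFne s hs0 hs1 t (by rwa [Metric.mem_closedBall, dist_zero_right] at ht)
  -- lower bound on the sphere
  have hlow : ∀ t : ℂ, ‖t‖ = r → 2 * m / 3 ≤ ‖F (s, t)‖ := by
    intro t ht
    have h1 := hmle t ht
    rw [← hF0 t] at h1
    have h2 := hdiff t (by rw [Metric.mem_closedBall, dist_zero_right]; exact ht.le)
    have h3 : ‖F (0, t)‖ - ‖F (s, t)‖ ≤ ‖F (s, t) - F (0, t)‖ := by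
      rw [norm_sub_rev]
      exact norm_sub_norm_le _ _
    linarith
  -- maximum modulus principle applied to 1 / F (s, ·)
  have hdiffF : Differentiable ℂ (fun t => F (s, t)) := by
    refine differentiable_mv_eval f (fun t => ζ s t) (fun i => ?_)
    refine Differentiable.add (Differentiable.add (differentiable_const _)
      (differentiable_const _)) ?_
    refine Differentiable.fun_sum fun j _ => ?_
    exact ((differentiable_const _).add (differentiable_id.mul (differentiable_const _))).mul
      (differentiable_const _)
  have hdc : DiffContOnCl ℂ (fun t => (F (s, t))⁻¹) (Metric.ball 0 r) := by
    constructor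
    · exact (hdiffF.differentiableOn).inv
        (fun t ht => hQne t (Metric.ball_subset_closedBall ht))
    · exact (hdiffF.continuous.continuousOn).inv₀
        (fun t ht => hQne t (Metric.closure_ball_subset_closedBall ht))
  have hfr : ∀ t ∈ frontier (Metric.ball (0 : ℂ) r), ‖(F (s, t))⁻¹‖ ≤ (2 * m / 3)⁻¹ := by
    intro t ht
    rw [frontier_ball _ hr.ne'] at ht
    have htn : ‖t‖ = r := by simpa [mem_sphere_iff_norm] using ht
    rw [norm_inv]
    have h1 := hlow t htn
    have h2 : (0 : ℝ) < 2 * m / 3 := by positivity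
    gcongr
  have h0cl : (0 : ℂ) ∈ closure (Metric.ball (0 : ℂ) r) :=
    subset_closure (Metric.mem_ball_self hr)
  have hmax := Complex.norm_le_of_forall_mem_frontier_norm_le Metric.isBounded_ball hdc hfr h0cl
  have hF0s : F (s, 0) ≠ 0 := hQne 0 (Metric.mem_closedBall_self hr.le)
  have hge : 2 * m / 3 ≤ ‖F (s, 0)‖ := by
    rw [norm_inv] at hmax
    have hpos : 0 < ‖F (s, 0)‖ := norm_pos_iff.mpr hF0s
    have h23 : (0 : ℝ) < 2 * m / 3 := by positivity
    rw [inv_le_inv₀ hpos h23] at hmax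
    exact hmax
  have hup : ‖F (s, 0)‖ < 2 * m / 3 := by
    have h2 := hdiff 0 (Metric.mem_closedBall_self hr.le)
    have h0 : F (0, 0) = 0 := by rw [hF0 0]; exact hq0
    rw [h0, sub_zero] at h2
    linarith
  linarith
end

section
/- Let K ⊆ ℝ^n be a closed convex cone and K' = K × ℝ_{≥0} ⊆ ℝ^{n+1}. Let f, g ∈ ℂ[z_1,…,z_n] with f ≢ 0 and f K-stable. Then the polynomial g(z) + y·f(z) ∈ ℂ[z_1,…,z_n,y] is K'-stable if and only if Im(g(z)/f(z)) ≥ 0 for all z ∈ ℂ^n with Im(z) in the relative interior of K. -/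
open MvPolynomial

/-- The cone `K' = K × ℝ_{≥0} ⊆ ℝ^{n+1}`. -/
def coneLift {n : ℕ} (K : Set (Fin n → ℝ)) : Set (Fin (n + 1) → ℝ) :=
  {x | (fun i : Fin n => x i.castSucc) ∈ K ∧ 0 ≤ x (Fin.last n)}

/-- The polynomial `g(z) + y·f(z) ∈ ℂ[z_1,…,z_n,y]`, where `y` is the last variable. -/
noncomputable def liftPoly {n : ℕ} (g f : MvPolynomial (Fin n) ℂ) :
    MvPolynomial (Fin (n + 1)) ℂ :=
  rename Fin.castSucc g + X (Fin.last n) * rename Fin.castSucc f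

/-- Metric characterization of membership in the intrinsic interior. -/
lemma mem_intrinsicInterior_iff_ball {E : Type*} [NormedAddCommGroup E] [NormedSpace ℝ E]
    {s : Set E} {x : E} :
    x ∈ intrinsicInterior ℝ s ↔
      x ∈ s ∧ ∃ ε > 0, ∀ y ∈ affineSpan ℝ s, dist y x < ε → y ∈ s := by
  constructor
  · rintro ⟨y, hy, rfl⟩
    have hys : (y : E) ∈ s := Set.mem_preimage.mp (interior_subset hy)
    refine ⟨hys, ?_⟩
    rw [mem_interior_iff_mem_nhds, Metric.mem_nhds_iff] at hy
    obtain ⟨ε, hε, hball⟩ := hy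
    refine ⟨ε, hε, fun z hz hdist => ?_⟩
    have : (⟨z, hz⟩ : affineSpan ℝ s) ∈ Metric.ball y ε := by
      simpa [Metric.mem_ball, Subtype.dist_eq] using hdist
    exact hball this
  · rintro ⟨hxs, ε, hε, hball⟩
    have hx' : x ∈ affineSpan ℝ s := subset_affineSpan ℝ s hxs
    refine ⟨⟨x, hx'⟩, ?_, rfl⟩
    rw [mem_interior_iff_mem_nhds, Metric.mem_nhds_iff]
    refine ⟨ε, hε, fun z hz => ?_⟩
    exact hball (z : E) z.2 (by simpa [Metric.mem_ball, Subtype.dist_eq] using hz)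

lemma pi_castSucc_mem_span {n : ℕ} {K : Set (Fin n → ℝ)} {w : Fin (n + 1) → ℝ}
    (hw : w ∈ affineSpan ℝ (coneLift K)) :
    (fun i : Fin n => w i.castSucc) ∈ affineSpan ℝ K := by
  have h : affineSpan ℝ (coneLift K) ≤
      AffineSubspace.comap (LinearMap.funLeft ℝ ℝ Fin.castSucc).toAffineMap
        (affineSpan ℝ K) := by
    rw [affineSpan_le]
    intro v hv
    exact AffineSubspace.mem_comap.mpr (subset_affineSpan ℝ K hv.1)
  exact AffineSubspace.mem_comap.mp (h hw)

/-- The linear embedding `x ↦ (x, 0)`. -/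
noncomputable def snocZeroL (n : ℕ) : (Fin n → ℝ) →ₗ[ℝ] (Fin (n + 1) → ℝ) where
  toFun x := Fin.snoc x 0
  map_add' x y := by
    funext j
    cases j using Fin.lastCases with
    | last => simp
    | cast i => simp
  map_smul' c x := by
    funext j
    cases j using Fin.lastCases with
    | last => simp
    | cast i => simp

lemma mem_span_coneLift {n : ℕ} {K : Set (Fin n → ℝ)} {x0 : Fin n → ℝ} (hx0 : x0 ∈ K)
    {w : Fin (n + 1) → ℝ} (hw : (fun i : Fin n => w i.castSucc) ∈ affineSpan ℝ K) :
    w ∈ affineSpan ℝ (coneLift K) := by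
  have hι : affineSpan ℝ K ≤
      AffineSubspace.comap (snocZeroL n).toAffineMap (affineSpan ℝ (coneLift K)) := by
    rw [affineSpan_le]
    intro x hx
    refine AffineSubspace.mem_comap.mpr (subset_affineSpan ℝ _ ⟨?_, ?_⟩)
    · simpa [snocZeroL] using hx
    · simp [snocZeroL]
  have hu : Fin.snoc (fun i : Fin n => w i.castSucc) (0 : ℝ) ∈ affineSpan ℝ (coneLift K) :=
    AffineSubspace.mem_comap.mp (hι hw)
  have h1 : (Fin.snoc x0 (1 : ℝ) : Fin (n + 1) → ℝ) ∈ affineSpan ℝ (coneLift K) :=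
    subset_affineSpan ℝ _ ⟨by simpa using hx0, by simp⟩
  have h0 : (Fin.snoc x0 (0 : ℝ) : Fin (n + 1) → ℝ) ∈ affineSpan ℝ (coneLift K) :=
    subset_affineSpan ℝ _ ⟨by simpa using hx0, by simp⟩
  have hv : (Fin.snoc x0 (1 : ℝ) : Fin (n + 1) → ℝ) - Fin.snoc x0 0 ∈
      (affineSpan ℝ (coneLift K)).direction := by
    simpa using AffineSubspace.vsub_mem_direction h1 h0
  have hv' : w (Fin.last n) • ((Fin.snoc x0 (1 : ℝ) : Fin (n + 1) → ℝ) - Fin.snoc x0 0) ∈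
      (affineSpan ℝ (coneLift K)).direction := Submodule.smul_mem _ _ hv
  have hw' := AffineSubspace.vadd_mem_of_mem_direction hv' hu
  have hweq : w = w (Fin.last n) • ((Fin.snoc x0 (1 : ℝ) : Fin (n + 1) → ℝ) - Fin.snoc x0 0) +ᵥ
      Fin.snoc (fun i : Fin n => w i.castSucc) (0 : ℝ) := by
    funext j
    cases j using Fin.lastCases with
    | last => simp
    | cast i => simp
  rw [← hweq] at hw'
  exact hw'

lemma snoc_mem_ri_coneLift {n : ℕ} {K : Set (Fin n → ℝ)} {x : Fin n → ℝ} {t : ℝ}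
    (hx : x ∈ intrinsicInterior ℝ K) (ht : 0 < t) :
    Fin.snoc x t ∈ intrinsicInterior ℝ (coneLift K) := by
  rw [mem_intrinsicInterior_iff_ball] at hx ⊢
  obtain ⟨hxK, ε, hε, hball⟩ := hx
  refine ⟨⟨by simpa using hxK, by simp [ht.le]⟩, min ε t, lt_min hε ht, ?_⟩
  intro y hy hdist
  have hπ : (fun i : Fin n => y i.castSucc) ∈ affineSpan ℝ K := pi_castSucc_mem_span hy
  constructor
  · refine hball _ hπ ?_
    rw [dist_pi_lt_iff hε]
    intro i
    calc dist (y i.castSucc) (x i)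
        ≤ dist y (Fin.snoc x t) := by
          simpa using dist_le_pi_dist y (Fin.snoc x t : Fin (n + 1) → ℝ) i.castSucc
      _ < ε := lt_of_lt_of_le hdist (min_le_left _ _)
  · have h1 : dist (y (Fin.last n)) t < t := by
      calc dist (y (Fin.last n)) t
          ≤ dist y (Fin.snoc x t) := by
            simpa using dist_le_pi_dist y (Fin.snoc x t : Fin (n + 1) → ℝ) (Fin.last n)
        _ < t := lt_of_lt_of_le hdist (min_le_right _ _)
    rw [Real.dist_eq, abs_sub_lt_iff] at h1
    linarith [h1.2]

lemma ri_coneLift_subset {n : ℕ} {K : Set (Fin n → ℝ)} {w : Fin (n + 1) → ℝ}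
    (hw : w ∈ intrinsicInterior ℝ (coneLift K)) :
    (fun i : Fin n => w i.castSucc) ∈ intrinsicInterior ℝ K ∧ 0 < w (Fin.last n) := by
  rw [mem_intrinsicInterior_iff_ball] at hw
  obtain ⟨⟨hwK, hwlast⟩, ε, hε, hball⟩ := hw
  have hlast : 0 < w (Fin.last n) := by
    rcases lt_or_eq_of_le hwlast with h | h
    · exact h
    haveI : Nonempty (Fin (n + 1)) := ⟨Fin.last n⟩
    exfalso
    set u : Fin (n + 1) → ℝ := Function.update w (Fin.last n) (-(ε / 2)) with hu
    have hu_span : u ∈ affineSpan ℝ (coneLift K) := by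
      refine mem_span_coneLift hwK ?_
      have heq : (fun i : Fin n => u i.castSucc) = fun i : Fin n => w i.castSucc := by
        funext i
        simp [hu, Function.update_of_ne (Fin.castSucc_lt_last i).ne]
      rw [heq]
      exact subset_affineSpan ℝ K hwK
    have hdist : dist u w < ε := by
      rw [dist_pi_lt_iff hε]
      intro j
      rcases eq_or_ne j (Fin.last n) with rfl | hj
      · rw [hu]
        simp only [Function.update_self]
        rw [← h, Real.dist_eq]
        rw [abs_of_nonpos (by linarith)]
        linarith
      · simp [hu, Function.update_of_ne hj, hε]
    have := (hball u hu_span hdist).2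
    rw [hu] at this
    simp only [Function.update_self] at this
    linarith
  refine ⟨?_, hlast⟩
  rw [mem_intrinsicInterior_iff_ball]
  refine ⟨hwK, ε, hε, ?_⟩
  intro y hy hdist
  set u : Fin (n + 1) → ℝ := Fin.snoc y (w (Fin.last n)) with hu
  have hu_span : u ∈ affineSpan ℝ (coneLift K) := by
    refine mem_span_coneLift hwK ?_
    have heq : (fun i : Fin n => u i.castSucc) = y := by
      funext i; simp [hu]
    rw [heq]; exact hy
  have hdist' : dist u w < ε := by
    rw [dist_pi_lt_iff hε]
    intro j
    cases j using Fin.lastCases with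
    | last => simpa [hu] using hε
    | cast i =>
      calc dist (u i.castSucc) (w i.castSucc)
          ≤ dist y (fun k : Fin n => w k.castSucc) := by
            simpa [hu] using dist_le_pi_dist y (fun k : Fin n => w k.castSucc) i
        _ < ε := hdist
  have hmem := (hball u hu_span hdist').1
  have heq : (fun i : Fin n => u i.castSucc) = y := by
    funext i; simp [hu]
  rwa [heq] at hmem

lemma eval_liftPoly {n : ℕ} (g f : MvPolynomial (Fin n) ℂ) (w : Fin (n + 1) → ℂ) :
    eval w (liftPoly g f) =
      eval (fun i : Fin n => w i.castSucc) g +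
        w (Fin.last n) * eval (fun i : Fin n => w i.castSucc) f := by
  simp only [liftPoly, map_add, map_mul, eval_X, eval_rename]
  rfl

/-- Let `f ≢ 0` be `K`-stable. Then `g(z) + y·f(z)` is `K × ℝ_{≥0}`-stable iff
`Im(g(z)/f(z)) ≥ 0` for all `z` with `Im(z)` in the relative interior of `K`. -/
theorem liftPoly_kStable_iff {n : ℕ} (K : Set (Fin n → ℝ))
    (hKcl : IsClosed K) (hKconv : Convex ℝ K)
    (hKcone : ∀ c : ℝ, 0 ≤ c → ∀ x ∈ K, c • x ∈ K)
    (f g : MvPolynomial (Fin n) ℂ) (hf0 : f ≠ 0) (hf : KStable K f) :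
    KStable (coneLift K) (liftPoly g f) ↔
      ∀ z : Fin n → ℂ, (fun i => (z i).im) ∈ intrinsicInterior ℝ K →
        0 ≤ (eval z g / eval z f).im := by
  constructor
  · intro H z hz
    by_contra hneg
    push_neg at hneg
    have hfz : eval z f ≠ 0 := hf z hz
    set y : ℂ := -(eval z g / eval z f) with hy
    set w : Fin (n + 1) → ℂ := Fin.snoc z y with hw
    have him : (fun i => (w i).im) = Fin.snoc (fun i => (z i).im) y.im := by
      funext j
      cases j using Fin.lastCases with
      | last => simp [hw]
      | cast i => simp [hw]
    have hyim : 0 < y.im := by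
      rw [hy]
      simpa using hneg
    have hwri : (fun i => (w i).im) ∈ intrinsicInterior ℝ (coneLift K) := by
      rw [him]
      exact snoc_mem_ri_coneLift hz hyim
    apply H w hwri
    have hz' : (fun i : Fin n => w i.castSucc) = z := by
      funext i; simp [hw]
    rw [eval_liftPoly, hz']
    have hwl : w (Fin.last n) = y := by simp [hw]
    rw [hwl, hy]
    field_simp
    ring
  · intro h w hw
    have hri := ri_coneLift_subset (K := K) (w := fun i => (w i).im) hw
    set z : Fin n → ℂ := fun i => w i.castSucc with hz
    have hzri : (fun i => (z i).im) ∈ intrinsicInterior ℝ K := hri.1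
    have hyim : 0 < (w (Fin.last n)).im := hri.2
    have hfz : eval z f ≠ 0 := hf z hzri
    rw [eval_liftPoly]
    rw [← hz]
    intro heq
    have hdiv : eval z g / eval z f = -(w (Fin.last n)) := by
      field_simp
      linear_combination heq
    have := h z hzri
    rw [hdiv] at this
    simp only [Complex.neg_im] at this
    linarith
end

section
/- Let f be a psd-stable polynomial in the entries of a symmetric n×n matrix of variables Z, with total degree d = deg(f). Then there exists a polynomial g in the entries of Z such that g(M) = det(M)^d · f(−M^{-1}) for every invertible complex symmetric n×n matrix M, and g is psd-stable. -/
open MvPolynomial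

/-- Variables of a symmetric `n×n` matrix of variables: pairs `(i,j)` with `i ≤ j`. -/
abbrev SymVar (n : ℕ) := {p : Fin n × Fin n // p.1 ≤ p.2}

/-- Evaluation of a polynomial in the entries of a symmetric matrix of variables
at a complex matrix `M` (the variable `z_ij` is sent to `M i j`). -/
noncomputable def evalMat {n : ℕ} (M : Matrix (Fin n) (Fin n) ℂ)
    (f : MvPolynomial (SymVar n) ℂ) : ℂ :=
  eval (fun v : SymVar n => M v.1.1 v.1.2) f

/-- A polynomial in the entries of a symmetric `n×n` matrix of variables is
psd-stable if it does not vanish at any complex symmetric matrix whose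
entrywise imaginary part is positive definite. -/
def PsdStable {n : ℕ} (f : MvPolynomial (SymVar n) ℂ) : Prop :=
  ∀ M : Matrix (Fin n) (Fin n) ℂ, M.IsSymm → (M.map Complex.im).PosDef →
    evalMat M f ≠ 0

namespace InversionAux

open Matrix

variable {n : ℕ}

lemma im_quad_pos {M : Matrix (Fin n) (Fin n) ℂ} (hM : M.IsSymm)
    (hP : (M.map Complex.im).PosDef) {y : Fin n → ℂ} (hy : y ≠ 0) :
    0 < (star y ⬝ᵥ M *ᵥ y).im := by
  set p : Fin n → ℝ := fun i => (y i).re with hp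
  set q : Fin n → ℝ := fun i => (y i).im with hq
  have expand : (star y ⬝ᵥ M *ᵥ y).im
      = ∑ i, ∑ j, ((M i j).im * (p i * p j + q i * q j)
          + (M i j).re * (p i * q j - q i * p j)) := by
    have h1 : star y ⬝ᵥ M *ᵥ y
        = ∑ i, ∑ j, (starRingEnd ℂ) (y i) * (M i j * y j) := by
      simp [dotProduct, Matrix.mulVec, Finset.mul_sum]
    rw [h1, Complex.im_sum]
    refine Finset.sum_congr rfl fun i _ => ?_
    rw [Complex.im_sum]
    refine Finset.sum_congr rfl fun j _ => ?_
    simp [Complex.mul_im, Complex.mul_re, hp, hq]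
    ring
  have hz : (∑ i, ∑ j, (M i j).re * (q i * p j))
      = ∑ i, ∑ j, (M i j).re * (p i * q j) := by
    rw [Finset.sum_comm]
    refine Finset.sum_congr rfl fun j _ => Finset.sum_congr rfl fun i _ => ?_
    rw [hM.apply j i]
    ring
  have e1 : p ⬝ᵥ (M.map Complex.im) *ᵥ p = ∑ i, ∑ j, (M i j).im * (p i * p j) := by
    simp only [dotProduct, Matrix.mulVec, Matrix.map_apply, Finset.mul_sum]
    exact Finset.sum_congr rfl fun i _ => Finset.sum_congr rfl fun j _ => by ring
  have e2 : q ⬝ᵥ (M.map Complex.im) *ᵥ q = ∑ i, ∑ j, (M i j).im * (q i * q j) := by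
    simp only [dotProduct, Matrix.mulVec, Matrix.map_apply, Finset.mul_sum]
    exact Finset.sum_congr rfl fun i _ => Finset.sum_congr rfl fun j _ => by ring
  have key : (star y ⬝ᵥ M *ᵥ y).im
      = p ⬝ᵥ (M.map Complex.im) *ᵥ p + q ⬝ᵥ (M.map Complex.im) *ᵥ q := by
    rw [expand, e1, e2]
    have split : ∑ i, ∑ j, ((M i j).im * (p i * p j + q i * q j)
          + (M i j).re * (p i * q j - q i * p j))
        = ((∑ i, ∑ j, (M i j).im * (p i * p j))
            + ∑ i, ∑ j, (M i j).im * (q i * q j))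
          + ((∑ i, ∑ j, (M i j).re * (p i * q j))
            - ∑ i, ∑ j, (M i j).re * (q i * p j)) := by
      simp only [mul_add, mul_sub, Finset.sum_add_distrib, Finset.sum_sub_distrib]
    rw [split, hz]
    ring
  rw [key]
  have hpq : p ≠ 0 ∨ q ≠ 0 := by
    by_contra h
    push_neg at h
    apply hy
    funext i
    have h1 : p i = 0 := by rw [h.1]; rfl
    have h2 : q i = 0 := by rw [h.2]; rfl
    exact Complex.ext h1 h2
  rcases hpq with h | h
  · have := hP.dotProduct_mulVec_pos h
    have h2 := hP.posSemidef.dotProduct_mulVec_nonneg q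
    simp only [star_trivial] at this h2
    linarith
  · have := hP.dotProduct_mulVec_pos h
    have h2 := hP.posSemidef.dotProduct_mulVec_nonneg p
    simp only [star_trivial] at this h2
    linarith

lemma det_ne_zero' {M : Matrix (Fin n) (Fin n) ℂ} (hM : M.IsSymm)
    (hP : (M.map Complex.im).PosDef) : M.det ≠ 0 := by
  intro h
  obtain ⟨v, hv, hMv⟩ := (Matrix.exists_mulVec_eq_zero_iff).2 h
  have := im_quad_pos hM hP hv
  rw [hMv] at this
  simp at this

lemma neg_inv_symm {M : Matrix (Fin n) (Fin n) ℂ} (hM : M.IsSymm) :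
    (-(M⁻¹)).IsSymm := by
  unfold Matrix.IsSymm
  rw [Matrix.transpose_neg, Matrix.transpose_nonsing_inv, hM]

lemma im_dot_real (N : Matrix (Fin n) (Fin n) ℂ) (x : Fin n → ℝ) :
    ((star fun i => (x i : ℂ)) ⬝ᵥ N *ᵥ fun i => (x i : ℂ)).im
      = x ⬝ᵥ (N.map Complex.im) *ᵥ x := by
  have h1 : (star fun i => (x i : ℂ)) ⬝ᵥ N *ᵥ (fun i => (x i : ℂ))
      = ∑ i, ∑ j, ((x i : ℂ)) * (N i j * (x j : ℂ)) := by
    simp [dotProduct, Matrix.mulVec, Finset.mul_sum, Complex.conj_ofReal]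
  rw [h1, Complex.im_sum]
  simp only [Complex.im_sum]
  simp only [dotProduct, Matrix.mulVec, Matrix.map_apply, Finset.mul_sum]
  refine Finset.sum_congr rfl fun i _ => Finset.sum_congr rfl fun j _ => ?_
  simp [Complex.mul_im, Complex.mul_re]

lemma neg_inv_posdef {M : Matrix (Fin n) (Fin n) ℂ} (hM : M.IsSymm)
    (hP : (M.map Complex.im).PosDef) : ((-(M⁻¹)).map Complex.im).PosDef := by
  have hdet : IsUnit M.det := isUnit_iff_ne_zero.2 (det_ne_zero' hM hP)
  refine Matrix.PosDef.of_dotProduct_mulVec_pos ?_ ?_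
  · have hs : (-(M⁻¹)).IsSymm := neg_inv_symm hM
    ext i j
    simp only [Matrix.conjTranspose_apply, Matrix.map_apply, star_trivial]
    rw [hs.apply i j]
  · intro x hx
    set x' : Fin n → ℂ := fun i => (x i : ℂ) with hx'def
    have hx' : x' ≠ 0 := by
      intro h
      apply hx
      funext i
      have h0 : (x i : ℂ) = 0 := congrFun h i
      exact_mod_cast h0
    obtain ⟨y, hMy, h1⟩ : ∃ y : Fin n → ℂ, M *ᵥ y = x' ∧ (-(M⁻¹)) *ᵥ x' = -y := by
      refine ⟨M⁻¹ *ᵥ x', ?_, ?_⟩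
      · rw [Matrix.mulVec_mulVec, Matrix.mul_nonsing_inv _ hdet, Matrix.one_mulVec]
      · rw [Matrix.neg_mulVec]
    have hy : y ≠ 0 := by
      intro h
      apply hx'
      rw [← hMy, h, Matrix.mulVec_zero]
    have hconj : star y ⬝ᵥ Mᴴ *ᵥ y = (starRingEnd ℂ) (star y ⬝ᵥ M *ᵥ y) := by
      have hL : star y ⬝ᵥ Mᴴ *ᵥ y
          = ∑ i, ∑ j, (starRingEnd ℂ) (y i) * ((starRingEnd ℂ) (M j i) * y j) := by
        simp [dotProduct, Matrix.mulVec, Matrix.conjTranspose_apply, Finset.mul_sum]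
      have hR : (starRingEnd ℂ) (star y ⬝ᵥ M *ᵥ y)
          = ∑ i, ∑ j, y i * ((starRingEnd ℂ) (M i j) * (starRingEnd ℂ) (y j)) := by
        simp [dotProduct, Matrix.mulVec, Finset.mul_sum, map_sum, _root_.map_mul,
          Complex.conj_conj]
      rw [hL, hR, Finset.sum_comm]
      refine Finset.sum_congr rfl fun j _ => Finset.sum_congr rfl fun i _ => ?_
      ring
    have hval : star x' ⬝ᵥ (-(M⁻¹)) *ᵥ x'
        = -(starRingEnd ℂ) (star y ⬝ᵥ M *ᵥ y) := by
      rw [h1, dotProduct_neg, ← hMy, Matrix.star_mulVec, ← Matrix.dotProduct_mulVec, hconj]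
    have him : star x ⬝ᵥ ((-(M⁻¹)).map Complex.im) *ᵥ x
        = (star x' ⬝ᵥ (-(M⁻¹)) *ᵥ x').im := by
      rw [star_trivial]
      exact (im_dot_real _ x).symm
    rw [him, hval]
    simpa using im_quad_pos hM hP hy

/-- The generic symmetric matrix of variables. -/
noncomputable def symX (n : ℕ) : Matrix (Fin n) (Fin n) (MvPolynomial (SymVar n) ℂ) :=
  Matrix.of fun i j => X ⟨(min i j, max i j), min_le_max⟩

lemma symX_map_eval {M : Matrix (Fin n) (Fin n) ℂ} (hM : M.IsSymm) :
    (symX n).map (eval fun v : SymVar n => M v.1.1 v.1.2) = M := by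
  ext i j
  simp only [symX, Matrix.map_apply, Matrix.of_apply, eval_X]
  rcases le_total i j with h | h
  · rw [min_eq_left h, max_eq_right h]
  · rw [min_eq_right h, max_eq_left h]
    exact hM.apply i j

theorem eval_g (f : MvPolynomial (SymVar n) ℂ)
    (M : Matrix (Fin n) (Fin n) ℂ) (hMs : M.IsSymm) (hdet : IsUnit M.det) :
    evalMat M (∑ α ∈ f.support, C (f.coeff α)
        * (symX n).det ^ (f.totalDegree - (α.sum fun _ e => e))
        * ∏ v ∈ α.support, (-((symX n).adjugate v.1.1 v.1.2)) ^ α v)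
      = M.det ^ f.totalDegree * evalMat (-(M⁻¹)) f := by
  set μ : SymVar n → ℂ := fun v => M v.1.1 v.1.2 with hμ
  set ν : SymVar n → ℂ := fun v => (-(M⁻¹)) v.1.1 v.1.2 with hν
  have hmap : (symX n).map (eval μ) = M := symX_map_eval hMs
  have hdetS : eval μ ((symX n).det) = M.det := by
    rw [RingHom.map_det, RingHom.mapMatrix_apply, hmap]
  have hadjS : ∀ i j, eval μ ((symX n).adjugate i j) = M.adjugate i j := by
    intro i j
    have h1 := RingHom.map_adjugate (eval μ : MvPolynomial (SymVar n) ℂ →+* ℂ) (symX n)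
    have h2 : (symX n).adjugate.map (eval μ) = M.adjugate := by
      rw [← RingHom.mapMatrix_apply, h1, RingHom.mapMatrix_apply, hmap]
    calc eval μ ((symX n).adjugate i j) = ((symX n).adjugate.map (eval μ)) i j := rfl
      _ = M.adjugate i j := by rw [h2]
  have hadj : M.adjugate = M.det • M⁻¹ := by
    rw [Matrix.inv_def, smul_smul, Ring.mul_inverse_cancel _ hdet, one_smul]
  show eval μ _ = _
  rw [map_sum, show evalMat (-(M⁻¹)) f = eval ν f from rfl, eval_eq, Finset.mul_sum]
  refine Finset.sum_congr rfl fun α hα => ?_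
  rw [_root_.map_mul, _root_.map_mul, map_pow, eval_C, hdetS, map_prod]
  simp only [map_pow, map_neg, hadjS]
  have hterm : ∀ v ∈ α.support,
      (-(M.adjugate v.1.1 v.1.2)) ^ α v = (M.det * (ν v)) ^ α v := by
    intro v _
    rw [hadj, hν]
    congr 1
    simp only [Matrix.smul_apply, smul_eq_mul, Matrix.neg_apply]
    ring
  rw [Finset.prod_congr rfl hterm]
  simp only [mul_pow]
  rw [Finset.prod_mul_distrib, Finset.prod_pow_eq_pow_sum]
  have hpow : M.det ^ (f.totalDegree - α.sum fun _ e => e) * M.det ^ (∑ v ∈ α.support, α v)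
      = M.det ^ f.totalDegree := by
    rw [← pow_add, show (∑ v ∈ α.support, α v) = α.sum fun _ e => e from rfl,
      Nat.sub_add_cancel (le_totalDegree hα)]
  rw [← hpow]
  ring

end InversionAux

/-- Inversion: if `f` is psd-stable of total degree `d`, then there is a
polynomial `g` with `g(M) = det(M)^d · f(−M⁻¹)` for every invertible complex
symmetric matrix `M`, and `g` is psd-stable. -/
theorem inversion_psdStable {n : ℕ} (f : MvPolynomial (SymVar n) ℂ)
    (hf : PsdStable f) :
    ∃ g : MvPolynomial (SymVar n) ℂ,
      (∀ M : Matrix (Fin n) (Fin n) ℂ, M.IsSymm → IsUnit M.det →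
        evalMat M g = M.det ^ f.totalDegree * evalMat (-(M⁻¹)) f) ∧
      PsdStable g := by
  open InversionAux in
  refine ⟨∑ α ∈ f.support, C (f.coeff α)
        * (symX n).det ^ (f.totalDegree - (α.sum fun _ e => e))
        * ∏ v ∈ α.support, (-((symX n).adjugate v.1.1 v.1.2)) ^ α v,
      fun M hMs hdet => InversionAux.eval_g f M hMs hdet, ?_⟩
  intro M hMs hpos
  have hdet : M.det ≠ 0 := InversionAux.det_ne_zero' hMs hpos
  rw [InversionAux.eval_g f M hMs (isUnit_iff_ne_zero.2 hdet)]
  exact mul_ne_zero (pow_ne_zero _ hdet)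
    (hf _ (InversionAux.neg_inv_symm hMs) (InversionAux.neg_inv_posdef hMs hpos))
end

section
/- Let A, B be real symmetric n×n matrices with B positive definite, and set C = A + iB. Then C is invertible, C^{-1} is symmetric, and the imaginary part of C^{-1} (the real symmetric matrix of entrywise imaginary parts of C^{-1}) is negative definite. -/
open Matrix

private lemma quad_split {n : ℕ} (M : Matrix (Fin n) (Fin n) ℝ) (hM : M.IsSymm)
    (x : Fin n → ℂ) :
    star x ⬝ᵥ (M.map (fun a => (a : ℂ))) *ᵥ x =
      (((fun i => (x i).re) ⬝ᵥ M *ᵥ (fun i => (x i).re)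
        + (fun i => (x i).im) ⬝ᵥ M *ᵥ (fun i => (x i).im) : ℝ) : ℂ) := by
  have hsym : ∀ i j, M j i = M i j := fun i j => congrFun (congrFun hM i) j
  apply Complex.ext
  · simp only [dotProduct, mulVec, Complex.ofReal_re, Complex.re_sum, Pi.star_apply,
      Finset.mul_sum, Complex.im_sum]
    rw [← Finset.sum_add_distrib]
    refine Finset.sum_congr rfl fun i _ => ?_
    rw [← Finset.sum_add_distrib]
    refine Finset.sum_congr rfl fun j _ => ?_
    simp only [map_apply, RCLike.star_def, Complex.mul_re, Complex.mul_im,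
      Complex.conj_re, Complex.conj_im, Complex.ofReal_re, Complex.ofReal_im]
    ring
  · simp only [dotProduct, mulVec, Complex.ofReal_im, Complex.im_sum, Pi.star_apply,
      Finset.mul_sum]
    have hterm : ∀ i j : Fin n, ((starRingEnd ℂ) (x i) * ((M.map (fun a => (a : ℂ))) i j * x j)).im
        = M i j * ((x i).re * (x j).im) - M i j * ((x i).im * (x j).re) := by
      intro i j
      simp only [map_apply, Complex.mul_im, Complex.mul_re, Complex.conj_re, Complex.conj_im,
        Complex.ofReal_re, Complex.ofReal_im]
      ring
    calc (∑ i, ∑ j, ((starRingEnd ℂ) (x i) * ((M.map (fun a => (a : ℂ))) i j * x j)).im)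
        = ∑ i, ∑ j, (M i j * ((x i).re * (x j).im) - M i j * ((x i).im * (x j).re)) := by
          exact Finset.sum_congr rfl fun i _ => Finset.sum_congr rfl fun j _ => hterm i j
      _ = (∑ i, ∑ j, M i j * ((x i).re * (x j).im))
            - ∑ i, ∑ j, M i j * ((x i).im * (x j).re) := by
          simp [Finset.sum_sub_distrib]
      _ = 0 := by
          rw [sub_eq_zero, Finset.sum_comm]
          refine Finset.sum_congr rfl fun i _ => Finset.sum_congr rfl fun j _ => ?_
          rw [hsym i j]
          ring

private lemma quad_pos {n : ℕ} {B : Matrix (Fin n) (Fin n) ℝ} (hB : B.PosDef)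
    {x : Fin n → ℂ} (hx : x ≠ 0) :
    0 < (fun i => (x i).re) ⬝ᵥ B *ᵥ (fun i => (x i).re)
        + (fun i => (x i).im) ⬝ᵥ B *ᵥ (fun i => (x i).im) := by
  have hpos : ∀ v : Fin n → ℝ, v ≠ 0 → 0 < v ⬝ᵥ B *ᵥ v := by
    intro v hv
    simpa using hB.dotProduct_mulVec_pos hv
  have hnonneg : ∀ v : Fin n → ℝ, 0 ≤ v ⬝ᵥ B *ᵥ v := by
    intro v
    by_cases hv : v = 0
    · simp [hv]
    · exact (hpos v hv).le
  by_cases hre : (fun i => (x i).re) = (0 : Fin n → ℝ)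
  · have him : (fun i => (x i).im) ≠ (0 : Fin n → ℝ) := by
      intro h
      apply hx
      funext i
      exact Complex.ext (congrFun hre i) (congrFun h i)
    have h1 := hpos _ him
    have h0 := hnonneg (fun i => (x i).re)
    linarith
  · have h1 := hpos _ hre
    have h0 := hnonneg (fun i => (x i).im)
    linarith

/-- Let `A, B` be real symmetric matrices with `B` positive definite and set
`C = A + iB`. Then `C` is invertible, `C⁻¹` is symmetric, and the entrywise
imaginary part of `C⁻¹` is negative definite (its negative is positive definite). -/
theorem inv_of_posdef_im {n : ℕ} (A B : Matrix (Fin n) (Fin n) ℝ)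
    (hA : A.IsSymm) (hB : B.PosDef)
    (C : Matrix (Fin n) (Fin n) ℂ)
    (hC : C = A.map (fun a => (a : ℂ)) + Complex.I • B.map (fun b => (b : ℂ))) :
    IsUnit C ∧ (C⁻¹).IsSymm ∧ (-(C⁻¹.map Complex.im)).PosDef := by
  have hBsymm : B.IsSymm := by
    ext i j
    simpa using congrFun (congrFun hB.1 i) j
  -- key quadratic computation
  have hquad : ∀ x : Fin n → ℂ,
      (star x ⬝ᵥ C *ᵥ x).im =
        (fun i => (x i).re) ⬝ᵥ B *ᵥ (fun i => (x i).re)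
          + (fun i => (x i).im) ⬝ᵥ B *ᵥ (fun i => (x i).im) := by
    intro x
    rw [hC, add_mulVec, dotProduct_add, smul_mulVec, dotProduct_smul,
      quad_split A hA x, quad_split B hBsymm x]
    simp [smul_eq_mul]
  -- C is invertible
  have hker : ∀ x : Fin n → ℂ, C *ᵥ x = 0 → x = 0 := by
    intro x hx0
    by_contra hx
    have h1 := quad_pos hB hx
    have h2 := hquad x
    rw [hx0, dotProduct_zero] at h2
    simp at h2
    linarith
  have hUnit : IsUnit C := by
    rw [← Matrix.mulVec_injective_iff_isUnit]
    intro a b hab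
    have h0 : C *ᵥ (a - b) = 0 := by
      rw [mulVec_sub, hab, sub_self]
    exact sub_eq_zero.mp (hker _ h0)
  -- C is symmetric
  have hCsymm : C.IsSymm := by
    unfold Matrix.IsSymm
    rw [hC, transpose_add, transpose_smul, ← Matrix.transpose_map, ← Matrix.transpose_map,
      hA, hBsymm]
  have hCinvSymm : (C⁻¹).IsSymm := by
    unfold Matrix.IsSymm
    rw [Matrix.transpose_nonsing_inv, hCsymm]
  refine ⟨hUnit, hCinvSymm, ?_⟩
  -- conjugate transpose of C
  have hCH : Cᴴ = A.map (fun a => (a : ℂ)) - Complex.I • B.map (fun b => (b : ℂ)) := by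
    ext i j
    simp [hC, conjTranspose_apply, map_apply, Complex.ext_iff]
    exact ⟨congrFun (congrFun hA i) j, congrFun (congrFun hBsymm i) j⟩
  apply Matrix.PosDef.of_dotProduct_mulVec_pos
  · -- Hermitian (= symmetric for a real matrix)
    have hsym : (C⁻¹.map Complex.im).IsSymm := by
      unfold Matrix.IsSymm
      rw [← Matrix.transpose_map, hCinvSymm]
    rw [Matrix.IsHermitian, conjTranspose_neg,
      show (C⁻¹.map Complex.im)ᴴ = (C⁻¹.map Complex.im)ᵀ from rfl, hsym]
  · intro x hx
    set x' : Fin n → ℂ := fun i => ((x i : ℝ) : ℂ) with hx'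
    have hx'0 : x' ≠ 0 := by
      intro h
      apply hx
      funext i
      simpa [hx'] using congrArg Complex.re (congrFun h i)
    set y : Fin n → ℂ := C⁻¹ *ᵥ x' with hy
    have hxCy : C *ᵥ y = x' := by
      rw [hy, mulVec_mulVec, Matrix.mul_nonsing_inv _ ((Matrix.isUnit_iff_isUnit_det C).mp hUnit),
        one_mulVec]
    have hy0 : y ≠ 0 := by
      intro h
      apply hx'0
      rw [← hxCy, h, mulVec_zero]
    -- x ⬝ᵥ (map im) *ᵥ x = im (star x' ⬝ᵥ C⁻¹ *ᵥ x')
    have hform : x ⬝ᵥ (C⁻¹.map Complex.im) *ᵥ x = (star x' ⬝ᵥ C⁻¹ *ᵥ x').im := by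
      simp only [dotProduct, mulVec, Complex.im_sum, Finset.mul_sum]
      refine Finset.sum_congr rfl fun i _ => ?_
      refine Finset.sum_congr rfl fun j _ => ?_
      simp only [hx', map_apply, Pi.star_apply, RCLike.star_def, Complex.conj_ofReal,
        Complex.mul_im, Complex.mul_re, Complex.ofReal_re, Complex.ofReal_im]
      ring
    have key : star x' ⬝ᵥ C⁻¹ *ᵥ x' = star y ⬝ᵥ Cᴴ *ᵥ y := by
      rw [← hy, ← hxCy, star_mulVec, ← dotProduct_mulVec]
    have him : (star y ⬝ᵥ Cᴴ *ᵥ y).im =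
        -((fun i => (y i).re) ⬝ᵥ B *ᵥ (fun i => (y i).re)
          + (fun i => (y i).im) ⬝ᵥ B *ᵥ (fun i => (y i).im)) := by
      rw [hCH, sub_mulVec, dotProduct_sub, smul_mulVec, dotProduct_smul,
        quad_split A hA y, quad_split B hBsymm y]
      simp [smul_eq_mul]
    have hs := quad_pos hB hy0
    have hfin : x ⬝ᵥ (C⁻¹.map Complex.im) *ᵥ x < 0 := by
      rw [hform, key, him]
      linarith
    have hlt : 0 < x ⬝ᵥ (-(C⁻¹.map Complex.im)) *ᵥ x := by
      rw [neg_mulVec, dotProduct_neg]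
      linarith
    simpa using hlt
end

section
/- Let A, B be real symmetric n×n matrices with B positive definite, and set C = A + iB. Then every eigenvalue λ of C satisfies Im(λ) > 0. -/
open Matrix

lemma quad_expand {n : ℕ} (M : Matrix (Fin n) (Fin n) ℝ) (v : Fin n → ℂ) :
    (star v ⬝ᵥ (M.map (fun a => (a:ℂ))).mulVec v) =
    Complex.ofReal ((fun i => (v i).re) ⬝ᵥ M.mulVec (fun i => (v i).re)
      + (fun i => (v i).im) ⬝ᵥ M.mulVec (fun i => (v i).im))
      + Complex.I * Complex.ofReal ((fun i => (v i).re) ⬝ᵥ M.mulVec (fun i => (v i).im)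
      - (fun i => (v i).im) ⬝ᵥ M.mulVec (fun i => (v i).re)) := by
  simp only [dotProduct, mulVec, map_apply, Pi.star_apply, Complex.ext_iff,
    Complex.add_re, Complex.add_im, Complex.mul_re, Complex.mul_im,
    Complex.I_re, Complex.I_im, Complex.ofReal_re, Complex.ofReal_im,
    Complex.re_sum, Complex.im_sum, Finset.mul_sum, Finset.sum_sub_distrib,
    Finset.sum_add_distrib, Complex.star_def, Complex.conj_re, Complex.conj_im,
    mul_zero, zero_mul, add_zero, sub_zero, zero_add, zero_sub, one_mul, mul_neg, neg_mul,
    sub_neg_eq_add, neg_neg, Finset.sum_neg_distrib]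
  constructor
  · trivial
  · ring_nf

lemma symm_dot {n : ℕ} (M : Matrix (Fin n) (Fin n) ℝ) (hM : M.IsSymm)
    (a b : Fin n → ℝ) : a ⬝ᵥ M.mulVec b = b ⬝ᵥ M.mulVec a := by
  rw [dotProduct_mulVec, ← mulVec_transpose, hM.eq, dotProduct_comm]

/-- Let `A, B` be real symmetric matrices with `B` positive definite and set
`C = A + iB`. Then every eigenvalue `λ` of `C` (i.e. `C v = λ v` for some
nonzero vector `v`) has positive imaginary part. -/
theorem eigenvalue_im_pos {n : ℕ} (A B : Matrix (Fin n) (Fin n) ℝ)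
    (hA : A.IsSymm) (hB : B.PosDef)
    (C : Matrix (Fin n) (Fin n) ℂ)
    (hC : C = A.map (fun a => (a : ℂ)) + Complex.I • B.map (fun b => (b : ℂ)))
    (lam : ℂ) (v : Fin n → ℂ) (hv : v ≠ 0) (heig : C.mulVec v = lam • v) :
    0 < lam.im := by
  set x : Fin n → ℝ := fun i => (v i).re with hx
  set y : Fin n → ℝ := fun i => (v i).im with hy
  -- the eigen-equation, paired with star v
  have key : star v ⬝ᵥ C.mulVec v = lam * (star v ⬝ᵥ v) := by
    rw [heig, dotProduct_smul, smul_eq_mul]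
  have hCexp : star v ⬝ᵥ C.mulVec v =
      (Complex.ofReal (x ⬝ᵥ A.mulVec x + y ⬝ᵥ A.mulVec y)
        + Complex.I * Complex.ofReal (x ⬝ᵥ A.mulVec y - y ⬝ᵥ A.mulVec x))
      + Complex.I * (Complex.ofReal (x ⬝ᵥ B.mulVec x + y ⬝ᵥ B.mulVec y)
        + Complex.I * Complex.ofReal (x ⬝ᵥ B.mulVec y - y ⬝ᵥ B.mulVec x)) := by
    rw [hC, add_mulVec, smul_mulVec, dotProduct_add, dotProduct_smul, smul_eq_mul,
      quad_expand, quad_expand]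
  have hAs : x ⬝ᵥ A.mulVec y - y ⬝ᵥ A.mulVec x = 0 := by
    rw [symm_dot A hA x y]; ring
  have hBsym : B.IsSymm := by
    have h1 := hB.1
    rw [Matrix.IsHermitian] at h1
    rw [Matrix.IsSymm, ← h1]
    ext i j
    simpa [conjTranspose_apply] using (congrFun (congrFun h1 i) j).symm
  have hBs : x ⬝ᵥ B.mulVec y - y ⬝ᵥ B.mulVec x = 0 := by
    rw [symm_dot B hBsym x y]; ring
  -- star v ⬝ᵥ v is a positive real
  have hs_re : (star v ⬝ᵥ v).re = x ⬝ᵥ x + y ⬝ᵥ y := by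
    simp [dotProduct, Complex.re_sum, Complex.mul_re, Complex.star_def, hx, hy,
      Finset.sum_add_distrib, mul_comm]
  have hs_im : (star v ⬝ᵥ v).im = 0 := by
    simp [dotProduct, Complex.im_sum, Complex.mul_im, Complex.star_def]
    ring_nf
    simp [mul_comm]
  -- nonzero vector: x ≠ 0 or y ≠ 0
  have hxy : x ≠ 0 ∨ y ≠ 0 := by
    by_contra h
    push_neg at h
    apply hv
    funext i
    have h1 : x i = 0 := by rw [h.1]; rfl
    have h2 : y i = 0 := by rw [h.2]; rfl
    exact Complex.ext h1 h2
  have hBpos : 0 < x ⬝ᵥ B.mulVec x + y ⬝ᵥ B.mulVec y := by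
    rcases hxy with h | h
    · have h1 := hB.dotProduct_mulVec_pos h
      have h2 := hB.posSemidef.dotProduct_mulVec_nonneg y
      simp only [RCLike.re_to_real, star_trivial] at h1 h2
      linarith
    · have h1 := hB.dotProduct_mulVec_pos h
      have h2 := hB.posSemidef.dotProduct_mulVec_nonneg x
      simp only [RCLike.re_to_real, star_trivial] at h1 h2
      linarith
  have hspos : 0 < (star v ⬝ᵥ v).re := by
    rw [hs_re]
    have h := hxy
    all_goals {
      have h1 : 0 ≤ x ⬝ᵥ x := Finset.sum_nonneg fun i _ => mul_self_nonneg _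
      have h2 : 0 ≤ y ⬝ᵥ y := Finset.sum_nonneg fun i _ => mul_self_nonneg _
      rcases h with h | h
      · have h3 : x ⬝ᵥ x ≠ 0 := fun hc => h (dotProduct_self_eq_zero.mp hc)
        have : 0 < x ⬝ᵥ x := lt_of_le_of_ne h1 (Ne.symm h3)
        linarith
      · have h3 : y ⬝ᵥ y ≠ 0 := fun hc => h (dotProduct_self_eq_zero.mp hc)
        have : 0 < y ⬝ᵥ y := lt_of_le_of_ne h2 (Ne.symm h3)
        linarith }
  -- take imaginary parts
  have him := congrArg Complex.im (hCexp.symm.trans key)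
  rw [hAs, hBs] at him
  simp only [Complex.add_im, Complex.mul_im, Complex.I_re, Complex.I_im, Complex.ofReal_re,
    Complex.ofReal_im, Complex.ofReal_zero, mul_zero, zero_mul, add_zero, zero_add,
    one_mul, hs_im] at him
  -- him : x ⬝ᵥ B x + y ⬝ᵥ B y (roughly) = lam.im * (star v ⬝ᵥ v).re
  have : lam.im = (x ⬝ᵥ B.mulVec x + y ⬝ᵥ B.mulVec y) / (star v ⬝ᵥ v).re := by
    field_simp
    linarith [him]
  rw [this]
  positivity
end

section
/- Let f be a psd-stable polynomial in the entries of a symmetric n×n matrix of variables Z, and let W be a real symmetric positive definite n×n matrix. Then the initial form in_W(f) is psd-stable. -/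
set_option maxHeartbeats 2000000

open Matrix

lemma sum_swap3 {n m : ℕ} (F : Fin n → Fin n → Fin m → ℝ) :
    (∑ i, ∑ j, ∑ k, F i j k) = ∑ k, ∑ i, ∑ j, F i j k :=
  (Finset.sum_congr rfl fun _ _ => Finset.sum_comm).trans Finset.sum_comm

/-- Schur product theorem: the entrywise product of real PSD matrices is PSD. -/
lemma schurPSD {n : ℕ} {A B : Matrix (Fin n) (Fin n) ℝ} (hA : A.PosSemidef) (hB : B.PosSemidef) :
    (Matrix.of fun i j => A i j * B i j).PosSemidef := by
  obtain ⟨m, v, hv⟩ := Matrix.posSemidef_iff_eq_sum_vecMulVec.mp hB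
  set C : Matrix (Fin m) (Fin n) ℝ := Matrix.of fun k i => v k i with hCdef
  have hB' : ∀ i j, B i j = ∑ k, C k i * C k j := by
    intro i j
    rw [hv]
    simp [C, Matrix.sum_apply, Matrix.vecMulVec_apply]
  refine Matrix.PosSemidef.of_dotProduct_mulVec_nonneg ?_ ?_
  · ext i j
    simp only [Matrix.conjTranspose_apply, Matrix.of_apply, star_trivial]
    rw [← hA.1.apply i j, ← hB.1.apply i j]
    simp
  · intro x
    have key : dotProduct (star x) ((Matrix.of fun i j => A i j * B i j) *ᵥ x)
        = ∑ k, dotProduct (star fun i => C k i * x i) (A *ᵥ fun i => C k i * x i) := by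
      simp only [dotProduct, Matrix.mulVec, Matrix.of_apply, star_trivial,
        Pi.star_apply]
      have L : (∑ i, x i * ∑ j, A i j * B i j * x j)
          = ∑ i, ∑ j, ∑ k, x i * (A i j * (C k i * C k j) * x j) := by
        refine Finset.sum_congr rfl fun i _ => ?_
        rw [Finset.mul_sum]
        refine Finset.sum_congr rfl fun j _ => ?_
        rw [hB', Finset.mul_sum, Finset.sum_mul, Finset.mul_sum]
      rw [L, sum_swap3]
      refine Finset.sum_congr rfl fun k _ => ?_
      refine Finset.sum_congr rfl fun i _ => ?_
      rw [Finset.mul_sum]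
      refine Finset.sum_congr rfl fun j _ => ?_
      ring
    rw [key]
    exact Finset.sum_nonneg fun k _ => hA.dotProduct_mulVec_nonneg _

lemma hadamardPowPSD {n : ℕ} {W : Matrix (Fin n) (Fin n) ℝ} (hW : W.PosSemidef) (k : ℕ) :
    (Matrix.of fun i j => W i j ^ k).PosSemidef := by
  induction k with
  | zero =>
    refine Matrix.PosSemidef.of_dotProduct_mulVec_nonneg ?_ ?_
    · ext i j; simp [Matrix.conjTranspose_apply]
    · intro x
      have : dotProduct (star x) ((Matrix.of fun i j : Fin n => W i j ^ 0) *ᵥ x)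
          = (∑ i, x i) * (∑ i, x i) := by
        simp [dotProduct, Matrix.mulVec, Finset.mul_sum, mul_comm]
      rw [this]
      exact mul_self_nonneg _
  | succ k ih =>
    have := schurPSD hW ih
    have heq : (Matrix.of fun i j => W i j * (Matrix.of fun i j => W i j ^ k) i j)
        = (Matrix.of fun i j => W i j ^ (k+1)) := by
      ext i j; simp [pow_succ, mul_comm]
    rwa [heq] at this

/-- entrywise `exp (c * W i j) * P i j` is positive definite for `W` PSD, `P` PD, `c ≥ 0`. -/
lemma expHadamardPD {n : ℕ} {W P : Matrix (Fin n) (Fin n) ℝ} (hW : W.PosSemidef)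
    (hP : P.PosDef) {c : ℝ} (hc : 0 ≤ c) :
    (Matrix.of fun i j => Real.exp (c * W i j) * P i j).PosDef := by
  refine Matrix.PosDef.of_dotProduct_mulVec_pos ?_ ?_
  · ext i j
    simp only [Matrix.conjTranspose_apply, Matrix.of_apply, star_trivial]
    rw [← hW.1.apply i j, ← hP.1.apply i j]
    simp
  · intro x hx
    set g : ℕ → ℝ := fun m => ∑ i, ∑ j, x i * ((c * W i j) ^ m / m.factorial * P i j * x j)
      with hg
    have hsum_ij : ∀ (i j : Fin n), Summable
        (fun m : ℕ => x i * ((c * W i j) ^ m / m.factorial * P i j * x j)) := by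
      intro i j
      have h0 := Real.summable_pow_div_factorial (c * W i j)
      have h1 := (h0.mul_right (P i j * x j)).mul_left (x i)
      refine h1.congr fun m => by push_cast; ring
    have hsum_inner : ∀ i : Fin n, Summable
        (fun m : ℕ => ∑ j, x i * ((c * W i j) ^ m / m.factorial * P i j * x j)) :=
      fun i => summable_sum (fun j _ => hsum_ij i j)
    have hgsum : Summable g := summable_sum (fun i _ => hsum_inner i)
    have hexp : ∀ i j, x i * (Real.exp (c * W i j) * P i j * x j)
        = ∑' m : ℕ, x i * ((c * W i j) ^ m / m.factorial * P i j * x j) := by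
      intro i j
      calc x i * (Real.exp (c * W i j) * P i j * x j)
          = (x i * P i j * x j) * ∑' m : ℕ, (c * W i j) ^ m / m.factorial := by
            rw [Real.exp_eq_exp_ℝ, NormedSpace.exp_eq_tsum_div]
            push_cast
            ring
        _ = ∑' m : ℕ, (x i * P i j * x j) * ((c * W i j) ^ m / m.factorial) := by
            rw [tsum_mul_left]
        _ = ∑' m : ℕ, x i * ((c * W i j) ^ m / m.factorial * P i j * x j) :=
            tsum_congr fun m => by ring
    have key : dotProduct (star x) ((Matrix.of fun i j => Real.exp (c * W i j) * P i j) *ᵥ x)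
        = ∑' m, g m := by
      simp only [dotProduct, Matrix.mulVec, Matrix.of_apply, star_trivial,
        Pi.star_apply, Finset.mul_sum]
      simp_rw [hexp, hg]
      rw [Summable.tsum_finsetSum (fun i (_ : i ∈ Finset.univ) => hsum_inner i)]
      refine Finset.sum_congr rfl fun i _ => ?_
      rw [Summable.tsum_finsetSum (fun j (_ : j ∈ Finset.univ) => hsum_ij i j)]
    rw [key]
    refine Summable.tsum_pos hgsum ?_ 0 ?_
    · intro m
      have hpsd := schurPSD (hadamardPowPSD hW m) hP.posSemidef
      have h2 := hpsd.dotProduct_mulVec_nonneg x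
      have heq : g m = (c ^ m / m.factorial) *
          dotProduct (star x) ((Matrix.of fun i j => W i j ^ m * P i j) *ᵥ x) := by
        simp only [hg, dotProduct, Matrix.mulVec, Matrix.of_apply, star_trivial,
          Pi.star_apply, Finset.mul_sum]
        refine Finset.sum_congr rfl fun i _ => ?_
        refine Finset.sum_congr rfl fun j _ => ?_
        rw [mul_pow]
        ring
      rw [heq]
      exact mul_nonneg (div_nonneg (pow_nonneg hc m) (Nat.cast_nonneg _)) h2
    · have h2 := hP.dotProduct_mulVec_pos hx
      have heq : g 0 = dotProduct (star x) (P *ᵥ x) := by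
        simp only [hg, dotProduct, Matrix.mulVec, star_trivial, Pi.star_apply,
          Finset.mul_sum, pow_zero, Nat.factorial_zero]
        refine Finset.sum_congr rfl fun i _ => ?_
        refine Finset.sum_congr rfl fun j _ => ?_
        push_cast
        ring
      rw [heq]
      exact h2

/-- Quadratic lower bound for a positive definite real matrix. -/
lemma posdef_lower_bound {n : ℕ} {P : Matrix (Fin n) (Fin n) ℝ} (hP : P.PosDef) :
    ∃ m > 0, ∀ x : Fin n → ℝ, m * (∑ i, x i ^ 2) ≤ ∑ i, ∑ j, x i * (P i j * x j) := by
  rcases Nat.eq_zero_or_pos n with hn | hn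
  · subst hn
    exact ⟨1, one_pos, fun x => by simp⟩
  · set f : EuclideanSpace ℝ (Fin n) → ℝ := fun x => ∑ i, ∑ j, x i * (P i j * x j) with hf
    have hfc : Continuous f := by
      apply continuous_finset_sum
      intro i _
      apply continuous_finset_sum
      intro j _
      exact ((EuclideanSpace.proj i).continuous).mul
        (continuous_const.mul (EuclideanSpace.proj j).continuous)
    have hne : (Metric.sphere (0 : EuclideanSpace ℝ (Fin n)) 1).Nonempty := by
      refine ⟨EuclideanSpace.single ⟨0, hn⟩ (1 : ℝ), ?_⟩
      rw [mem_sphere_zero_iff_norm, EuclideanSpace.norm_single]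
      exact norm_one
    obtain ⟨x₀, hx₀S, hmin'⟩ :=
      (isCompact_sphere (0 : EuclideanSpace ℝ (Fin n)) 1).exists_isMinOn hne hfc.continuousOn
    have hmin : ∀ y ∈ Metric.sphere (0 : EuclideanSpace ℝ (Fin n)) 1, f x₀ ≤ f y :=
      fun y hy => hmin' hy
    have hx₀ : (x₀ : Fin n → ℝ) ≠ 0 := by
      intro h
      have h1 : ‖x₀‖ = 1 := mem_sphere_zero_iff_norm.mp hx₀S
      have h0 : x₀ = 0 := by ext i; simp [h]
      rw [h0] at h1
      simp at h1
    have hm : 0 < f x₀ := by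
      have := hP.dotProduct_mulVec_pos hx₀
      simpa [hf, dotProduct, Matrix.mulVec, Finset.mul_sum] using this
    refine ⟨f x₀, hm, fun x => ?_⟩
    rcases eq_or_ne x 0 with rfl | hx
    · simp
    · set x' : EuclideanSpace ℝ (Fin n) := (WithLp.equiv 2 (Fin n → ℝ)).symm x with hx'
      have hx'app : ∀ i, x' i = x i := fun i => rfl
      set r : ℝ := Real.sqrt (∑ i, x i ^ 2) with hr
      have hN2 : 0 < ∑ i, x i ^ 2 := by
        have : ∃ i, x i ≠ 0 := by
          by_contra h
          push_neg at h
          exact hx (funext h)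
        obtain ⟨i, hi⟩ := this
        refine Finset.sum_pos' (fun j _ => sq_nonneg _) ⟨i, Finset.mem_univ i, ?_⟩
        positivity
      have hrpos : 0 < r := Real.sqrt_pos.mpr hN2
      have hr2 : r ^ 2 = ∑ i, x i ^ 2 := Real.sq_sqrt hN2.le
      set y : EuclideanSpace ℝ (Fin n) := r⁻¹ • x' with hy
      have hnx : ‖x'‖ = r := by
        rw [EuclideanSpace.norm_eq, hr]
        congr 1
        refine Finset.sum_congr rfl fun i _ => ?_
        rw [hx'app, Real.norm_eq_abs, sq_abs]
      have hyS : y ∈ Metric.sphere (0 : EuclideanSpace ℝ (Fin n)) 1 := by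
        rw [mem_sphere_zero_iff_norm, hy, norm_smul, hnx, Real.norm_eq_abs,
          abs_of_pos (inv_pos.mpr hrpos), inv_mul_cancel₀ hrpos.ne']
      have hfy : f y = (r⁻¹) ^ 2 * (∑ i, ∑ j, x i * (P i j * x j)) := by
        simp only [hf, hy, Finset.mul_sum, PiLp.smul_apply, smul_eq_mul]
        refine Finset.sum_congr rfl fun i _ => ?_
        refine Finset.sum_congr rfl fun j _ => ?_
        rw [hx'app, hx'app]
        ring
      have hle := hmin y hyS
      rw [hfy] at hle
      have hrr : (r⁻¹) ^ 2 * r ^ 2 = 1 := by field_simp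
      have h2 : f x₀ * r ^ 2 ≤ ∑ i, ∑ j, x i * (P i j * x j) := by
        calc f x₀ * r ^ 2 ≤ (r⁻¹ ^ 2 * ∑ i, ∑ j, x i * (P i j * x j)) * r ^ 2 :=
              mul_le_mul_of_nonneg_right hle (sq_nonneg r)
          _ = (∑ i, ∑ j, x i * (P i j * x j)) * (r⁻¹ ^ 2 * r ^ 2) := by ring
          _ = _ := by rw [hrr, mul_one]
      calc f x₀ * (∑ i, x i ^ 2) = f x₀ * r ^ 2 := by rw [hr2]
        _ ≤ _ := h2

lemma quad_abs_bound {n : ℕ} (Q : Matrix (Fin n) (Fin n) ℝ) (x : Fin n → ℝ) :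
    |∑ i, ∑ j, x i * (Q i j * x j)| ≤ (∑ i, ∑ j, |Q i j|) * (∑ i, x i ^ 2) := by
  calc |∑ i, ∑ j, x i * (Q i j * x j)| ≤ ∑ i, |∑ j, x i * (Q i j * x j)| :=
        Finset.abs_sum_le_sum_abs _ _
    _ ≤ ∑ i, ∑ j, |x i * (Q i j * x j)| :=
        Finset.sum_le_sum fun i _ => Finset.abs_sum_le_sum_abs _ _
    _ ≤ ∑ i, ∑ j, |Q i j| * (∑ k, x k ^ 2) := by
        refine Finset.sum_le_sum fun i _ => Finset.sum_le_sum fun j _ => ?_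
        have hxi : x i ^ 2 ≤ ∑ k, x k ^ 2 :=
          Finset.single_le_sum (f := fun k => x k ^ 2) (fun k _ => sq_nonneg _)
            (Finset.mem_univ i)
        have hxj : x j ^ 2 ≤ ∑ k, x k ^ 2 :=
          Finset.single_le_sum (f := fun k => x k ^ 2) (fun k _ => sq_nonneg _)
            (Finset.mem_univ j)
        rw [abs_mul, abs_mul]
        nlinarith [sq_nonneg (|x i| - |x j|), sq_abs (x i), sq_abs (x j), abs_nonneg (Q i j),
          abs_nonneg (x i), abs_nonneg (x j)]
    _ = (∑ i, ∑ j, |Q i j|) * (∑ i, x i ^ 2) := by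
        rw [Finset.sum_mul]
        exact Finset.sum_congr rfl fun i _ => by rw [Finset.sum_mul]

lemma posdef_perturb {n : ℕ} {P : Matrix (Fin n) (Fin n) ℝ} (hP : P.PosDef)
    (Q R : Matrix (Fin n) (Fin n) ℝ) (hQ : ∀ i j, Q j i = Q i j) (hR : ∀ i j, R j i = R i j) :
    ∃ ε > 0, ∀ a b : ℝ, |a| ≤ ε → |b| ≤ ε →
      (Matrix.of fun i j => P i j + a * Q i j + b * R i j).PosDef := by
  obtain ⟨m, hm, hbound⟩ := posdef_lower_bound hP
  set KQ := ∑ i, ∑ j, |Q i j| with hKQ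
  set KR := ∑ i, ∑ j, |R i j| with hKR
  have hKQ0 : 0 ≤ KQ := Finset.sum_nonneg fun i _ => Finset.sum_nonneg fun j _ => abs_nonneg _
  have hKR0 : 0 ≤ KR := Finset.sum_nonneg fun i _ => Finset.sum_nonneg fun j _ => abs_nonneg _
  set ε := m / (2 * (KQ + KR + 1)) with hε
  have hεpos : 0 < ε := by positivity
  have hεK : ε * (KQ + KR) ≤ m / 2 := by
    rw [hε]
    rw [div_mul_eq_mul_div, div_le_div_iff₀ (by positivity) (by norm_num)]
    nlinarith
  refine ⟨ε, hεpos, fun a b ha hb => ?_⟩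
  refine Matrix.PosDef.of_dotProduct_mulVec_pos ?_ ?_
  · ext i j
    simp only [Matrix.conjTranspose_apply, Matrix.of_apply, star_trivial]
    rw [hQ, hR]
    have := hP.1.apply i j
    simp only [star_trivial] at this
    rw [this]
  · intro x hx
    set S_P := ∑ i, ∑ j, x i * (P i j * x j) with hSP'
    set S_Q := ∑ i, ∑ j, x i * (Q i j * x j) with hSQ'
    set S_R := ∑ i, ∑ j, x i * (R i j * x j) with hSR'
    set N2 := ∑ i, x i ^ 2 with hN2'
    have hN2 : 0 < N2 := by
      have : ∃ i, x i ≠ 0 := by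
        by_contra h
        push_neg at h
        exact hx (funext h)
      obtain ⟨i, hi⟩ := this
      exact Finset.sum_pos' (fun j _ => sq_nonneg _) ⟨i, Finset.mem_univ i, by positivity⟩
    have hSP : m * N2 ≤ S_P := hbound x
    have hQb : |S_Q| ≤ KQ * N2 := quad_abs_bound Q x
    have hRb : |S_R| ≤ KR * N2 := quad_abs_bound R x
    have h1 : -(ε * (KQ * N2)) ≤ a * S_Q := by
      have h1a : |a * S_Q| ≤ ε * (KQ * N2) := by
        rw [abs_mul]
        exact mul_le_mul ha hQb (abs_nonneg _) hεpos.le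
      linarith [neg_abs_le (a * S_Q)]
    have h2 : -(ε * (KR * N2)) ≤ b * S_R := by
      have h2a : |b * S_R| ≤ ε * (KR * N2) := by
        rw [abs_mul]
        exact mul_le_mul hb hRb (abs_nonneg _) hεpos.le
      linarith [neg_abs_le (b * S_R)]
    have hdot : dotProduct (star x) ((Matrix.of fun i j => P i j + a * Q i j + b * R i j) *ᵥ x)
        = S_P + a * S_Q + b * S_R := by
      simp only [hSP', hSQ', hSR', dotProduct, Matrix.mulVec, Matrix.of_apply,
        star_trivial, Pi.star_apply, Finset.mul_sum]
      rw [← Finset.sum_add_distrib, ← Finset.sum_add_distrib]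
      refine Finset.sum_congr rfl fun i _ => ?_
      rw [← Finset.sum_add_distrib, ← Finset.sum_add_distrib]
      refine Finset.sum_congr rfl fun j _ => ?_
      ring
    rw [hdot]
    nlinarith [mul_nonneg (sub_nonneg.mpr hεK) hN2.le, mul_pos hm hN2]

lemma multiset_prod_map_le {ι : Type*} (s : Multiset ι) (f g : ι → ℝ)
    (h0 : ∀ i ∈ s, 0 ≤ f i) (h : ∀ i ∈ s, f i ≤ g i) :
    (s.map f).prod ≤ (s.map g).prod := by
  induction s using Multiset.induction_on with
  | empty => simp
  | cons a s ih =>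
    simp only [Multiset.map_cons, Multiset.prod_cons]
    have hfs : 0 ≤ (s.map f).prod := by
      refine Multiset.prod_nonneg ?_
      intro x hxm
      obtain ⟨i, hi, rfl⟩ := Multiset.mem_map.mp hxm
      exact h0 i (Multiset.mem_cons_of_mem hi)
    refine mul_le_mul (h a (Multiset.mem_cons_self a s))
      (ih (fun i hi => h0 i (Multiset.mem_cons_of_mem hi))
        (fun i hi => h i (Multiset.mem_cons_of_mem hi))) hfs ?_
    exact le_trans (h0 a (Multiset.mem_cons_self a s)) (h a (Multiset.mem_cons_self a s))

lemma norm_multiset_prod' (m : Multiset ℂ) : ‖m.prod‖ = (m.map fun z => ‖z‖).prod := by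
  induction m using Multiset.induction_on with
  | empty => simp
  | cons a s ih => simp [norm_mul, ih]

/-- If a complex polynomial of degree at most `D` has no roots in the open disc of radius
`ε`, then its value at `0` is comparable to its values on the disc of radius `ε/3`. -/
lemma poly_disc_bound (p : Polynomial ℂ) (D : ℕ) (hD : p.natDegree ≤ D) {ε : ℝ}
    (hε : 0 < ε) (hroot : ∀ z : ℂ, ‖z‖ < ε → p.eval z ≠ 0) :
    ∀ s : ℂ, ‖s‖ ≤ ε / 3 → (3/4 : ℝ) ^ D * ‖p.eval s‖ ≤ ‖p.eval 0‖ := by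
  intro s hs
  have hp0 : p ≠ 0 := by
    intro h
    exact hroot 0 (by simpa using hε) (by simp [h])
  have hsplit := (IsAlgClosed.splits p).eq_prod_roots
  have heval : ∀ z : ℂ, ‖p.eval z‖ = ‖p.leadingCoeff‖ * (p.roots.map fun r => ‖z - r‖).prod := by
    intro z
    conv_lhs => rw [hsplit]
    rw [Polynomial.eval_mul, Polynomial.eval_C, Polynomial.eval_multiset_prod, norm_mul]
    congr 1
    rw [norm_multiset_prod', Multiset.map_map, Multiset.map_map]
    refine congrArg Multiset.prod (Multiset.map_congr rfl fun r _ => ?_)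
    simp [Function.comp]
  have hrootnorm : ∀ r ∈ p.roots, ε ≤ ‖r‖ := by
    intro r hr
    by_contra h
    push_neg at h
    exact hroot r h ((Polynomial.mem_roots hp0).mp hr)
  have hcard : p.roots.card ≤ D := le_trans (Polynomial.card_roots' p) hD
  rw [heval, heval]
  have key : (3/4 : ℝ) ^ D * (p.roots.map fun r => ‖s - r‖).prod
      ≤ (p.roots.map fun r => ‖(0 : ℂ) - r‖).prod := by
    have h1 : ∀ r ∈ p.roots, (3/4 : ℝ) * ‖s - r‖ ≤ ‖(0 : ℂ) - r‖ := by
      intro r hr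
      have h2 : ‖s - r‖ ≤ ‖s‖ + ‖r‖ := norm_sub_le _ _
      have h3 : ε ≤ ‖r‖ := hrootnorm r hr
      have h4 : ‖(0 : ℂ) - r‖ = ‖r‖ := by rw [zero_sub, norm_neg]
      rw [h4]
      nlinarith [norm_nonneg (s - r)]
    calc (3/4 : ℝ) ^ D * (p.roots.map fun r => ‖s - r‖).prod
        ≤ (3/4 : ℝ) ^ p.roots.card * (p.roots.map fun r => ‖s - r‖).prod := by
          refine mul_le_mul_of_nonneg_right
            (pow_le_pow_of_le_one (by norm_num) (by norm_num) hcard) ?_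
          refine Multiset.prod_nonneg ?_
          intro x hxm
          obtain ⟨r, hr, rfl⟩ := Multiset.mem_map.mp hxm
          exact norm_nonneg _
      _ = (p.roots.map fun r => (3/4 : ℝ) * ‖s - r‖).prod := by
          rw [Multiset.prod_map_mul]
          congr 1
          rw [Multiset.map_const', Multiset.prod_replicate]
      _ ≤ (p.roots.map fun r => ‖(0 : ℂ) - r‖).prod := by
          refine multiset_prod_map_le _ _ _ (fun r _ => by positivity) h1
  calc (3/4 : ℝ) ^ D * (‖p.leadingCoeff‖ * (p.roots.map fun r => ‖s - r‖).prod)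
      = ‖p.leadingCoeff‖ * ((3/4 : ℝ) ^ D * (p.roots.map fun r => ‖s - r‖).prod) := by ring
    _ ≤ ‖p.leadingCoeff‖ * (p.roots.map fun r => ‖(0:ℂ) - r‖).prod :=
        mul_le_mul_of_nonneg_left key (norm_nonneg _)



open MvPolynomial

/-- The Frobenius pairing `⟨W, α⟩_F` of a real symmetric matrix `W` with the
symmetric exponent matrix of a monomial recorded by `m : SymVar n →₀ ℕ` (the
exponent of `z_ij` contributes `W_ij`-weight per unit, symmetrically). -/
noncomputable def frobWeight {n : ℕ} (W : Matrix (Fin n) (Fin n) ℝ)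
    (m : SymVar n →₀ ℕ) : ℝ :=
  ∑ v : SymVar n, W v.1.1 v.1.2 * (m v : ℝ)

open scoped Classical in
/-- The initial form of `f` with respect to a real symmetric matrix `W`: the sum
of the terms of `f` whose exponent matrices maximize the Frobenius pairing with
`W` over the support of `f`. -/
noncomputable def initialFormMat {n : ℕ} (W : Matrix (Fin n) (Fin n) ℝ)
    (f : MvPolynomial (SymVar n) ℂ) : MvPolynomial (SymVar n) ℂ :=
  ∑ α ∈ f.support.filter
      (fun α => ∀ β ∈ f.support, frobWeight W β ≤ frobWeight W α),
    monomial α (coeff α f)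

/-- If `f` is psd-stable and `W` is positive definite, then the initial form
`in_W(f)` is psd-stable. -/
theorem initialFormMat_psdStable {n : ℕ} (f : MvPolynomial (SymVar n) ℂ)
    (hf : PsdStable f) (W : Matrix (Fin n) (Fin n) ℝ) (hW : W.PosDef) :
    PsdStable (initialFormMat W f) := by
  classical
  intro M hM hMim hcontra
  -- f is nonzero since it is psd-stable
  have hfne : f.support.Nonempty := by
    rw [Finset.nonempty_iff_ne_empty, Ne, MvPolynomial.support_eq_empty]
    intro hf0
    refine hf (Matrix.diagonal fun _ => Complex.I) (Matrix.isSymm_diagonal _) ?_ ?_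
    · have : (Matrix.diagonal fun _ : Fin n => Complex.I).map Complex.im = 1 := by
        ext i j
        by_cases hij : i = j <;>
          simp [Matrix.map_apply, Matrix.diagonal, Matrix.one_apply, hij]
      rw [this]
      exact Matrix.PosDef.one
    · rw [hf0]
      simp [evalMat]
  set S := f.support with hSdef
  set T := S.filter (fun α => ∀ β ∈ S, frobWeight W β ≤ frobWeight W α) with hTdef
  have hinit : initialFormMat W f = ∑ α ∈ T, monomial α (coeff α f) := rfl
  obtain ⟨α₀, hα₀S, hα₀max⟩ := Finset.exists_max_image S (frobWeight W) hfne
  have hα₀T : α₀ ∈ T := Finset.mem_filter.mpr ⟨hα₀S, hα₀max⟩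
  set c := frobWeight W α₀ with hcdef
  have hTsub : T ⊆ S := Finset.filter_subset _ _
  have hTc : ∀ α ∈ T, frobWeight W α = c := by
    intro α hα
    have h1 := (Finset.mem_filter.mp hα).2 α₀ hα₀S
    have h2 := hα₀max α (hTsub hα)
    linarith
  have hlt : ∀ α ∈ S, α ∉ T → frobWeight W α < c := by
    intro α hαS hαT
    have : ¬ ∀ β ∈ S, frobWeight W β ≤ frobWeight W α := by
      intro hc
      exact hαT (Finset.mem_filter.mpr ⟨hαS, hc⟩)
    push_neg at this
    obtain ⟨β, hβS, hβ⟩ := this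
    exact lt_of_lt_of_le hβ (hα₀max β hβS)
  -- the initial form is nonzero, pick a point where it does not vanish
  have hinit_ne : initialFormMat W f ≠ 0 := by
    intro h0
    have : coeff α₀ (initialFormMat W f) = coeff α₀ f := by
      rw [hinit, MvPolynomial.coeff_sum]
      rw [Finset.sum_eq_single α₀]
      · simp
      · intro β hβ hne
        simp [MvPolynomial.coeff_monomial, hne]
      · intro h
        exact absurd hα₀T h
    rw [h0] at this
    simp only [coeff_zero] at this
    exact (MvPolynomial.mem_support_iff.mp hα₀S) this.symm
  have hx : ∃ x : SymVar n → ℂ, eval x (initialFormMat W f) ≠ 0 := by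
    by_contra hall
    push_neg at hall
    exact hinit_ne (MvPolynomial.funext fun x => by rw [hall x, map_zero])
  obtain ⟨x, hxne⟩ := hx
  -- direction matrix N
  set N : Matrix (Fin n) (Fin n) ℂ := Matrix.of fun i j =>
    if h : i ≤ j then x ⟨(i, j), h⟩ - M i j else x ⟨(j, i), le_of_not_ge h⟩ - M j i with hNdef
  have hN_up : ∀ (i j : Fin n) (h : i ≤ j), N i j = x ⟨(i, j), h⟩ - M i j := by
    intro i j h
    simp only [hNdef, Matrix.of_apply, dif_pos h]
  have hN_sym : ∀ i j, N j i = N i j := by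
    intro i j
    by_cases h1 : i ≤ j
    · by_cases h2 : j ≤ i
      · have : i = j := le_antisymm h1 h2
        subst this
        rfl
      · simp only [hNdef, Matrix.of_apply, dif_neg h2, dif_pos h1]
    · have h2 : j ≤ i := le_of_not_ge h1
      by_cases h3 : i ≤ j
      · exact absurd h3 h1
      · simp only [hNdef, Matrix.of_apply, dif_pos h2, dif_neg h1]
  have hMN1 : ∀ v : SymVar n, M v.1.1 v.1.2 + N v.1.1 v.1.2 * 1 = x v := by
    rintro ⟨⟨i, j⟩, hij⟩
    rw [mul_one, hN_up i j hij]
    ring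
  -- real and imaginary parts
  set Pm : Matrix (Fin n) (Fin n) ℝ := M.map Complex.im with hPmdef
  set Qm : Matrix (Fin n) (Fin n) ℝ := N.map Complex.im with hQmdef
  set Rm : Matrix (Fin n) (Fin n) ℝ := N.map Complex.re with hRmdef
  have hQsym : ∀ i j, Qm j i = Qm i j := fun i j => by
    simp only [hQmdef, Matrix.map_apply, hN_sym i j]
  have hRsym : ∀ i j, Rm j i = Rm i j := fun i j => by
    simp only [hRmdef, Matrix.map_apply, hN_sym i j]
  obtain ⟨ε, hεpos, hpert⟩ := posdef_perturb hMim Qm Rm hQsym hRsym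
  -- the univariate polynomials
  set q : (SymVar n →₀ ℕ) → Polynomial ℂ := fun α =>
    ∏ v : SymVar n, (Polynomial.C (M v.1.1 v.1.2) + Polynomial.C (N v.1.1 v.1.2)
      * Polynomial.X) ^ (α v) with hqdef
  have hqeval : ∀ α (s : ℂ), (q α).eval s
      = ∏ v : SymVar n, (M v.1.1 v.1.2 + N v.1.1 v.1.2 * s) ^ (α v) := by
    intro α s
    simp [hqdef, Polynomial.eval_prod]
  set h : Polynomial ℂ := ∑ α ∈ T, Polynomial.C (coeff α f) * q α with hhdef
  set p : ℝ → Polynomial ℂ := fun t =>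
    ∑ α ∈ S, Polynomial.C (coeff α f * ((t ^ (frobWeight W α - c) : ℝ) : ℂ)) * q α with hpdef
  set D : ℕ := ∑ α ∈ S, ∑ v : SymVar n, α v with hDdef
  have hdeg : ∀ t : ℝ, (p t).natDegree ≤ D := by
    intro t
    refine Polynomial.natDegree_sum_le_of_forall_le _ _ fun α hα => ?_
    refine le_trans (Polynomial.natDegree_mul_le) ?_
    rw [Polynomial.natDegree_C, zero_add]
    refine le_trans (Polynomial.natDegree_prod_le _ _) ?_
    refine le_trans (Finset.sum_le_sum fun v (_ : v ∈ Finset.univ) =>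
      (Polynomial.natDegree_pow_le (p := Polynomial.C (M v.1.1 v.1.2)
        + Polynomial.C (N v.1.1 v.1.2) * Polynomial.X) (n := α v))) ?_
    have hone : ∀ v : SymVar n, (Polynomial.C (M v.1.1 v.1.2)
        + Polynomial.C (N v.1.1 v.1.2) * Polynomial.X).natDegree ≤ 1 := by
      intro v
      refine le_trans (Polynomial.natDegree_add_le _ _) ?_
      simp only [Polynomial.natDegree_C, max_le_iff]
      constructor
      · norm_num
      · exact le_trans (Polynomial.natDegree_mul_le) (by simp [Polynomial.natDegree_X_le])
    refine le_trans (Finset.sum_le_sum fun v (_ : v ∈ Finset.univ) =>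
      Nat.mul_le_mul_left (α v) (hone v)) ?_
    simp only [mul_one]
    exact Finset.single_le_sum (f := fun α => ∑ v : SymVar n, α v)
      (fun β _ => Nat.zero_le _) hα
  -- nonvanishing of p t on the disc of radius ε
  have hno : ∀ t : ℝ, 1 ≤ t → ∀ s : ℂ, ‖s‖ < ε → (p t).eval s ≠ 0 := by
    intro t ht s hs
    have ht0 : (0 : ℝ) < t := lt_of_lt_of_le one_pos ht
    set L := Real.log t with hLdef
    have hL0 : 0 ≤ L := Real.log_nonneg ht
    set A : Matrix (Fin n) (Fin n) ℂ := Matrix.of fun i j =>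
      ((t ^ (W i j) : ℝ) : ℂ) * (M i j + N i j * s) with hAdef
    have hAsymm : A.IsSymm := by
      refine Matrix.IsSymm.ext fun i j => ?_
      simp only [hAdef, Matrix.of_apply]
      have hw : W j i = W i j := by
        have := hW.1.apply i j
        simpa using this
      rw [hw, hM.apply i j, hN_sym i j]
    have hAim : A.map Complex.im = Matrix.of fun i j =>
        Real.exp (L * W i j) * (Pm i j + s.re * Qm i j + s.im * Rm i j) := by
      ext i j
      simp only [Matrix.map_apply, hAdef, Matrix.of_apply, Complex.mul_im, Complex.add_im,
        Complex.add_re, Complex.ofReal_re, Complex.ofReal_im, Complex.mul_im, Complex.mul_re,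
        hPmdef, hQmdef, hRmdef]
      rw [Real.rpow_def_of_pos ht0]
      ring
    have hApd : (A.map Complex.im).PosDef := by
      rw [hAim]
      have hre : |s.re| ≤ ε := le_trans (le_trans (Complex.abs_re_le_norm s) le_rfl) hs.le
      have him : |s.im| ≤ ε := le_trans (Complex.abs_im_le_norm s) hs.le
      have hPP := hpert s.re s.im hre him
      have := expHadamardPD hW.posSemidef hPP hL0
      simpa only [Matrix.of_apply] using this
    have hfA := hf A hAsymm hApd
    -- key algebraic identity
    have hA_eval : evalMat A f = ∑ α ∈ S, coeff α f
        * ((Real.exp (L * frobWeight W α) : ℝ) : ℂ)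
        * ∏ v : SymVar n, (M v.1.1 v.1.2 + N v.1.1 v.1.2 * s) ^ (α v) := by
      rw [evalMat, MvPolynomial.eval_eq']
      refine Finset.sum_congr rfl fun α hα => ?_
      have h1 : ∀ v : SymVar n, (fun v : SymVar n => A v.1.1 v.1.2) v ^ (α v)
          = ((Real.exp (L * (W v.1.1 v.1.2 * (α v : ℝ))) : ℝ) : ℂ)
            * (M v.1.1 v.1.2 + N v.1.1 v.1.2 * s) ^ (α v) := by
        intro v
        show (((t ^ (W v.1.1 v.1.2) : ℝ) : ℂ) * (M v.1.1 v.1.2 + N v.1.1 v.1.2 * s)) ^ (α v) = _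
        rw [mul_pow, ← Complex.ofReal_pow, Real.rpow_def_of_pos ht0, ← Real.exp_nat_mul]
        congr 3
        ring
      rw [Finset.prod_congr rfl fun v _ => h1 v, Finset.prod_mul_distrib,
        ← Complex.ofReal_prod, ← Real.exp_sum]
      have h2 : (∑ v : SymVar n, L * (W v.1.1 v.1.2 * (α v : ℝ))) = L * frobWeight W α := by
        rw [frobWeight, Finset.mul_sum]
      rw [h2, mul_assoc]
    have hp_eval : (p t).eval s = ∑ α ∈ S, coeff α f
        * ((Real.exp (L * (frobWeight W α - c)) : ℝ) : ℂ)
        * ∏ v : SymVar n, (M v.1.1 v.1.2 + N v.1.1 v.1.2 * s) ^ (α v) := by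
      rw [hpdef, Polynomial.eval_finset_sum]
      refine Finset.sum_congr rfl fun α hα => ?_
      rw [Polynomial.eval_mul, Polynomial.eval_C, hqeval, Real.rpow_def_of_pos ht0]
    have hrel : evalMat A f = ((Real.exp (L * c) : ℝ) : ℂ) * (p t).eval s := by
      rw [hA_eval, hp_eval, Finset.mul_sum]
      refine Finset.sum_congr rfl fun α hα => ?_
      have h3 : Real.exp (L * frobWeight W α)
          = Real.exp (L * c) * Real.exp (L * (frobWeight W α - c)) := by
        rw [← Real.exp_add]
        congr 1
        ring
      rw [h3]
      push_cast
      ring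
    intro h0
    rw [hrel, h0, mul_zero] at hfA
    exact hfA rfl
  -- limit of p t is h
  have hps : ∀ (t : ℝ) (s : ℂ), (p t).eval s = h.eval s
      + ∑ α ∈ S.filter (fun α => α ∉ T),
          coeff α f * ((t ^ (frobWeight W α - c) : ℝ) : ℂ) * (q α).eval s := by
    intro t s
    have hsplit := Finset.sum_filter_add_sum_filter_not S (fun α => α ∈ T)
      (fun α => (Polynomial.C (coeff α f * ((t ^ (frobWeight W α - c) : ℝ) : ℂ)) * q α).eval s)
    have hfilterT : S.filter (fun α => α ∈ T) = T := by
      ext β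
      simp only [Finset.mem_filter]
      exact ⟨fun h' => h'.2, fun h' => ⟨hTsub h', h'⟩⟩
    rw [hpdef, Polynomial.eval_finset_sum, ← hsplit, hfilterT]
    congr 1
    · rw [hhdef, Polynomial.eval_finset_sum]
      refine Finset.sum_congr rfl fun α hα => ?_
      rw [Polynomial.eval_mul, Polynomial.eval_mul, Polynomial.eval_C, Polynomial.eval_C,
        hTc α hα, sub_self, Real.rpow_zero]
      push_cast
      ring
    · refine Finset.sum_congr rfl fun α hα => ?_
      rw [Polynomial.eval_mul, Polynomial.eval_C]
  have hptend : ∀ s : ℂ, Filter.Tendsto (fun t : ℝ => (p t).eval s)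
      Filter.atTop (nhds (h.eval s)) := by
    intro s
    have htends : Filter.Tendsto (fun t : ℝ => ∑ α ∈ S.filter (fun α => α ∉ T),
        coeff α f * ((t ^ (frobWeight W α - c) : ℝ) : ℂ) * (q α).eval s)
        Filter.atTop (nhds 0) := by
      have : (0 : ℂ) = ∑ α ∈ S.filter (fun α => α ∉ T), 0 := by simp
      rw [this]
      refine tendsto_finset_sum _ fun α hα => ?_
      have hαS : α ∈ S := (Finset.mem_filter.mp hα).1
      have hαT : α ∉ T := (Finset.mem_filter.mp hα).2
      have hneg : 0 < c - frobWeight W α := sub_pos.mpr (hlt α hαS hαT)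
      have hb : Filter.Tendsto (fun t : ℝ => t ^ (frobWeight W α - c))
          Filter.atTop (nhds 0) := by
        have := tendsto_rpow_neg_atTop hneg
        refine this.congr fun t => ?_
        congr 1
        ring
      have hbC : Filter.Tendsto (fun t : ℝ => ((t ^ (frobWeight W α - c) : ℝ) : ℂ))
          Filter.atTop (nhds 0) := by
        have := (Complex.continuous_ofReal.tendsto 0).comp hb
        exact this
      have := (hbC.const_mul (coeff α f)).mul_const ((q α).eval s)
      simpa using this
    have := htends.const_add (h.eval s)
    simp only [add_zero] at this
    refine Filter.Tendsto.congr (fun t => (hps t s).symm) this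
  -- pass to the limit in the disc bound
  have hh0 : h.eval 0 = evalMat M (initialFormMat W f) := by
    rw [hhdef, Polynomial.eval_finset_sum, evalMat, hinit, map_sum]
    refine Finset.sum_congr rfl fun α hα => ?_
    rw [Polynomial.eval_mul, Polynomial.eval_C, hqeval, MvPolynomial.eval_monomial,
      Finsupp.prod_fintype _ _ (fun v => pow_zero _)]
    simp
  have hh1 : h.eval 1 = eval x (initialFormMat W f) := by
    rw [hhdef, Polynomial.eval_finset_sum, hinit, map_sum]
    refine Finset.sum_congr rfl fun α hα => ?_
    rw [Polynomial.eval_mul, Polynomial.eval_C, hqeval, MvPolynomial.eval_monomial,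
      Finsupp.prod_fintype _ _ (fun v => pow_zero _)]
    congr 1
    exact Finset.prod_congr rfl fun v _ => by rw [hMN1 v]
  have hzero : ∀ s : ℂ, ‖s‖ ≤ ε / 3 → h.eval s = 0 := by
    intro s hs
    have hineq : ((3 : ℝ)/4) ^ D * ‖h.eval s‖ ≤ ‖h.eval 0‖ := by
      refine le_of_tendsto_of_tendsto (((hptend s).norm).const_mul (((3:ℝ)/4) ^ D))
        ((hptend 0).norm) ?_
      filter_upwards [Filter.eventually_ge_atTop (1 : ℝ)] with t ht
      exact poly_disc_bound (p t) D (hdeg t) hεpos (hno t ht) s hs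
    rw [hh0, hcontra] at hineq
    simp only [norm_zero] at hineq
    have h34 : (0 : ℝ) < ((3:ℝ)/4) ^ D := by positivity
    have : ‖h.eval s‖ ≤ 0 := by nlinarith
    exact norm_le_zero_iff.mp this
  have hhzero : h = 0 := by
    refine Polynomial.eq_zero_of_infinite_isRoot h ?_
    have hmem : ∀ k : ℕ, ((ε / 3 / (k + 1) : ℝ) : ℂ) ∈ {z : ℂ | h.IsRoot z} := by
      intro k
      have hk : (0 : ℝ) < (k : ℝ) + 1 := by positivity
      have hle : ‖((ε / 3 / (k + 1) : ℝ) : ℂ)‖ ≤ ε / 3 := by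
        rw [Complex.norm_real, Real.norm_eq_abs, abs_of_pos (by positivity)]
        rw [div_le_iff₀ hk]
        nlinarith [hεpos]
      exact hzero _ hle
    refine Set.infinite_of_injective_forall_mem (f := fun k : ℕ => ((ε / 3 / (k + 1) : ℝ) : ℂ))
      ?_ hmem
    intro a b hab
    have h3 : (0:ℝ) < ε / 3 := by positivity
    have ha : (0:ℝ) < (a:ℝ) + 1 := by positivity
    have hb : (0:ℝ) < (b:ℝ) + 1 := by positivity
    have : (ε / 3 / (a + 1) : ℝ) = ε / 3 / (b + 1) := by
      exact_mod_cast congrArg Complex.re hab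
    rw [div_eq_div_iff ha.ne' hb.ne'] at this
    have h5 : ((b:ℝ) + 1) = (a:ℝ) + 1 := mul_left_cancel₀ h3.ne' this
    have h6 : (a : ℝ) = b := by linarith
    exact_mod_cast h6
  rw [hhzero] at hh1
  simp only [Polynomial.eval_zero] at hh1
  exact hxne hh1.symm
end

section
/- Let f be a psd-stable polynomial in the entries of a symmetric n×n matrix of variables Z. If an off-diagonal variable z_ij (i < j) occurs in f (i.e., some monomial of f has positive exponent on z_ij), then the diagonal variables z_ii and z_jj also occur in f. -/
open MvPolynomial

section Aux

variable {n : ℕ}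

/-- number of coordinates of `v` equal to `k` -/
def cwt (k : Fin n) (v : SymVar n) : ℕ :=
  (if v.1.1 = k then 1 else 0) + (if v.1.2 = k then 1 else 0)

/-- sorted pair -/
def svar (a b : Fin n) : SymVar n :=
  if h : a ≤ b then ⟨(a, b), h⟩ else ⟨(b, a), le_of_not_ge h⟩

lemma svar_self (v : SymVar n) : svar v.1.1 v.1.2 = v := by
  rcases v with ⟨⟨a, b⟩, h⟩
  simp [svar, h]

lemma svar_comm (a b : Fin n) : svar a b = svar b a := by
  unfold svar
  rcases le_or_gt a b with h | h
  · rcases eq_or_lt_of_le h with rfl | h'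
    · simp
    · simp [h, not_le.mpr h']
  · simp [not_le.mpr h, le_of_lt h]

lemma svar_fst_eq_snd_iff (a b : Fin n) :
    ((svar a b).1.1 = (svar a b).1.2) ↔ a = b := by
  unfold svar
  split
  · simp
  · constructor
    · intro h; exact h.symm
    · intro h; exact h.symm

lemma cwt_svar (k a b : Fin n) :
    cwt k (svar a b) = (if a = k then 1 else 0) + (if b = k then 1 else 0) := by
  unfold cwt svar
  split <;> simp [add_comm]

end Aux

section PolyAux

variable {σ : Type*}

/-- Evaluation only depends on the values at occurring variables. -/
lemma eval_congr_support (f : MvPolynomial σ ℂ) (x y : σ → ℂ)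
    (h : ∀ v, (∃ α ∈ f.support, α v ≠ 0) → x v = y v) :
    MvPolynomial.eval x f = MvPolynomial.eval y f := by
  rw [MvPolynomial.eval_eq, MvPolynomial.eval_eq]
  refine Finset.sum_congr rfl fun α hα => ?_
  congr 1
  refine Finset.prod_congr rfl fun v hv => ?_
  rw [h v ⟨α, hα, Finsupp.mem_support_iff.mp hv⟩]

lemma eval_aeval_poly (g : MvPolynomial σ ℂ) (h : σ → Polynomial ℂ) (t : ℂ) :
    (MvPolynomial.aeval h g).eval t
      = MvPolynomial.eval (fun v => (h v).eval t) g := by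
  induction g using MvPolynomial.induction_on with
  | C a => simp
  | add p q hp hq => simp [hp, hq]
  | mul_X p v hp => simp [hp]

/-- the weight of a monomial exponent under entry-weights `c` -/
def wtc (c : σ → ℕ) (α : σ →₀ ℕ) : ℕ := ∑ v ∈ α.support, α v * c v

set_option linter.unusedSectionVars false in
/-- coefficient formula for the `X`-degree-graded pieces -/
lemma coeff_aeval_weight [DecidableEq σ] (f : MvPolynomial σ ℂ) (m : σ → ℂ) (c : σ → ℕ) (d : ℕ) :
    (MvPolynomial.aeval (fun v => Polynomial.C (m v) * Polynomial.X ^ c v) f).coeff d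
      = ∑ α ∈ f.support.filter (fun α => wtc c α = d),
          MvPolynomial.coeff α f * ∏ v ∈ α.support, m v ^ α v := by
  rw [MvPolynomial.aeval_def, MvPolynomial.eval₂_eq]
  rw [Polynomial.finset_sum_coeff]
  rw [Finset.sum_filter]
  refine Finset.sum_congr rfl fun α hα => ?_
  have hprod : (∏ v ∈ α.support, (Polynomial.C (m v) * Polynomial.X ^ c v) ^ α v)
      = Polynomial.C (∏ v ∈ α.support, m v ^ α v)
        * Polynomial.X ^ (∑ v ∈ α.support, α v * c v) := by
    have h1 : ∀ v ∈ α.support,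
        (Polynomial.C (m v) * Polynomial.X ^ c v) ^ α v
          = Polynomial.C (m v ^ α v) * Polynomial.X ^ (α v * c v) := by
      intro v _
      rw [mul_pow, ← Polynomial.C_pow, ← pow_mul, mul_comm (c v) (α v)]
    rw [Finset.prod_congr rfl h1, Finset.prod_mul_distrib, ← map_prod,
      Finset.prod_pow_eq_pow_sum]
  rw [hprod, Polynomial.algebraMap_eq, ← mul_assoc, ← Polynomial.C_mul,
    Polynomial.coeff_C_mul, Polynomial.coeff_X_pow]
  by_cases hw : wtc c α = d
  · simp only [wtc] at hw
    simp [wtc, hw]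
  · simp only [wtc] at hw
    simp [wtc, hw, Ne.symm hw]

end PolyAux

section PD

variable {n : ℕ}
open Finset Matrix

lemma cross_bound (c u v : ℝ) : -(|c| * u ^ 2 / 2 + |c| * v ^ 2 / 2) ≤ u * c * v := by
  have h1 : -|u * c * v| ≤ u * c * v := neg_abs_le _
  have h2 : |u * c * v| = |c| * (|u| * |v|) := by
    rw [abs_mul, abs_mul]; ring
  have h3 : |u| * |v| ≤ (u ^ 2 + v ^ 2) / 2 := by
    nlinarith [sq_nonneg (|u| - |v|), sq_abs u, sq_abs v]
  nlinarith [abs_nonneg c]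

lemma sum_erase_pad (h : Fin n → Fin n → ℝ) (a : Fin n) :
    ∑ b ∈ univ.erase a, h a b = ∑ b, if b = a then 0 else h a b := by
  rw [Finset.sum_ite, Finset.sum_const_zero, zero_add, Finset.filter_ne']

lemma sum_erase_swap (g : Fin n → Fin n → ℝ) :
    ∑ a, ∑ b ∈ univ.erase a, g a b = ∑ a, ∑ b ∈ univ.erase a, g b a := by
  rw [Finset.sum_congr rfl fun a _ => sum_erase_pad g a,
    Finset.sum_congr rfl fun a _ => sum_erase_pad (fun a b => g b a) a]
  rw [Finset.sum_comm]
  refine Finset.sum_congr rfl fun a _ => Finset.sum_congr rfl fun b _ => ?_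
  exact if_congr eq_comm rfl rfl

lemma quad_lower (A : Matrix (Fin n) (Fin n) ℝ) (hsym : ∀ a b, A a b = A b a)
    (x : Fin n → ℝ) :
    ∑ a, (A a a - ∑ b ∈ univ.erase a, |A a b|) * x a ^ 2 ≤ x ⬝ᵥ A *ᵥ x := by
  have expand : x ⬝ᵥ A *ᵥ x
      = ∑ a, (A a a * x a ^ 2 + ∑ b ∈ univ.erase a, x a * A a b * x b) := by
    simp only [dotProduct, Matrix.mulVec, Finset.mul_sum]
    refine Finset.sum_congr rfl fun a _ => ?_
    rw [← Finset.add_sum_erase _ _ (Finset.mem_univ a)]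
    refine congrArg₂ (· + ·) (by ring) ?_
    exact Finset.sum_congr rfl fun b _ => by ring
  have swap : ∑ a, ∑ b ∈ univ.erase a, |A a b| * x b ^ 2 / 2
      = ∑ a, ∑ b ∈ univ.erase a, |A a b| * x a ^ 2 / 2 := by
    calc ∑ a, ∑ b ∈ univ.erase a, |A a b| * x b ^ 2 / 2
        = ∑ a, ∑ b ∈ univ.erase a, |A b a| * x a ^ 2 / 2 :=
          sum_erase_swap (fun a b => |A a b| * x b ^ 2 / 2)
      _ = ∑ a, ∑ b ∈ univ.erase a, |A a b| * x a ^ 2 / 2 :=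
          Finset.sum_congr rfl fun a _ => Finset.sum_congr rfl fun b _ => by rw [hsym a b]
  have e1 : ∑ a, ∑ b ∈ univ.erase a, (|A a b| * x a ^ 2 / 2 + |A a b| * x b ^ 2 / 2)
      = ∑ a, ∑ b ∈ univ.erase a, |A a b| * x a ^ 2 := by
    simp only [Finset.sum_add_distrib]
    rw [swap]
    rw [← Finset.sum_add_distrib]
    refine Finset.sum_congr rfl fun a _ => ?_
    rw [← Finset.sum_add_distrib]
    refine Finset.sum_congr rfl fun b _ => by ring
  have main : -(∑ a, ∑ b ∈ univ.erase a, |A a b| * x a ^ 2)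
      ≤ ∑ a, ∑ b ∈ univ.erase a, x a * A a b * x b := by
    rw [← e1]
    have h4 : ∑ a, -(∑ b ∈ univ.erase a, (|A a b| * x a ^ 2 / 2 + |A a b| * x b ^ 2 / 2))
        ≤ ∑ a, ∑ b ∈ univ.erase a, x a * A a b * x b :=
      Finset.sum_le_sum fun a _ => by
        rw [← Finset.sum_neg_distrib]
        exact Finset.sum_le_sum fun b _ => cross_bound (A a b) (x a) (x b)
    rw [Finset.sum_neg_distrib] at h4
    exact h4
  rw [expand]
  calc ∑ a, (A a a - ∑ b ∈ univ.erase a, |A a b|) * x a ^ 2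
      = ∑ a, (A a a * x a ^ 2 - ∑ b ∈ univ.erase a, |A a b| * x a ^ 2) := by
        refine Finset.sum_congr rfl fun a _ => ?_
        rw [sub_mul, Finset.sum_mul]
    _ = (∑ a, A a a * x a ^ 2) - ∑ a, ∑ b ∈ univ.erase a, |A a b| * x a ^ 2 := by
        rw [Finset.sum_sub_distrib]
    _ ≤ (∑ a, A a a * x a ^ 2) + ∑ a, ∑ b ∈ univ.erase a, x a * A a b * x b := by
        rw [sub_eq_add_neg]
        exact add_le_add_right main _
    _ = ∑ a, (A a a * x a ^ 2 + ∑ b ∈ univ.erase a, x a * A a b * x b) := by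
        rw [Finset.sum_add_distrib]

lemma posDef_of_dominant (A : Matrix (Fin n) (Fin n) ℝ) (hsym : ∀ a b, A a b = A b a)
    (p : Fin n → ℝ) (hp : ∀ a, 0 < p a)
    (hdom : ∀ a, ∑ b ∈ univ.erase a, |A a b| * p b < A a a * p a) : A.PosDef := by
  rw [Matrix.posDef_iff_dotProduct_mulVec]
  constructor
  · ext a b
    simp only [Matrix.conjTranspose_apply, star_trivial]
    exact hsym b a
  · intro x hx
    simp only [star_trivial]
    set A' : Matrix (Fin n) (Fin n) ℝ := fun a b => p a * A a b * p b with hA'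
    set y : Fin n → ℝ := fun a => x a / p a with hy
    have key : x ⬝ᵥ A *ᵥ x = y ⬝ᵥ A' *ᵥ y := by
      simp only [dotProduct, Matrix.mulVec, Finset.mul_sum]
      refine Finset.sum_congr rfl fun a _ => Finset.sum_congr rfl fun b _ => ?_
      simp only [hA', hy]
      have h1 : p a ≠ 0 := (hp a).ne'
      have h2 : p b ≠ 0 := (hp b).ne'
      field_simp
    rw [key]
    have hlow := quad_lower A' (fun a b => by simp only [hA']; rw [hsym a b]; ring) y
    have hcoeff : ∀ a, 0 < (A' a a - ∑ b ∈ univ.erase a, |A' a b|) := by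
      intro a
      have habs : ∀ b, |A' a b| = p a * (|A a b| * p b) := by
        intro b
        simp only [hA']
        rw [abs_mul, abs_mul, abs_of_pos (hp a), abs_of_pos (hp b)]
        ring
      have h5 : ∑ b ∈ univ.erase a, |A' a b| = p a * ∑ b ∈ univ.erase a, |A a b| * p b := by
        rw [Finset.mul_sum]
        exact Finset.sum_congr rfl fun b _ => habs b
      rw [h5]
      have h6 : A' a a = p a * (A a a * p a) := by simp only [hA']; ring
      rw [h6, ← mul_sub]
      exact mul_pos (hp a) (by linarith [hdom a])
    obtain ⟨a₀, ha₀⟩ := Function.ne_iff.mp hx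
    have hy₀ : y a₀ ≠ 0 := by
      simp only [hy]
      exact div_ne_zero ha₀ (ne_of_gt (hp a₀))
    have hpos : 0 < ∑ a, (A' a a - ∑ b ∈ univ.erase a, |A' a b|) * y a ^ 2 := by
      refine Finset.sum_pos' (fun a _ => ?_) ⟨a₀, Finset.mem_univ a₀, ?_⟩
      · exact mul_nonneg (le_of_lt (hcoeff a)) (sq_nonneg _)
      · exact mul_pos (hcoeff a₀) (by positivity)
    linarith

end PD

section Main

lemma diag_occurs {n : ℕ} (f : MvPolynomial (SymVar n) ℂ) (hf : PsdStable f) (k : Fin n)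
    (v₀ : SymVar n) (hc : cwt k v₀ ≠ 0) (hocc : ∃ α ∈ f.support, α v₀ ≠ 0) :
    ∃ α ∈ f.support, α ⟨(k, k), le_refl k⟩ ≠ 0 := by
  classical
  by_contra hno
  push_neg at hno
  obtain ⟨α₀, hα₀, hα₀v⟩ := hocc
  set c : SymVar n → ℕ := cwt k with hcdef
  set d : ℕ := f.support.sup (wtc c) with hddef
  have hv₀mem : v₀ ∈ α₀.support := Finsupp.mem_support_iff.mpr hα₀v
  have hwα₀ : 1 ≤ wtc c α₀ := by
    have h1 : α₀ v₀ * c v₀ ≤ wtc c α₀ := by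
      unfold wtc
      exact Finset.single_le_sum (f := fun v => α₀ v * c v) (fun v _ => Nat.zero_le _) hv₀mem
    have h2 : 1 ≤ α₀ v₀ * c v₀ :=
      Nat.one_le_iff_ne_zero.mpr (Nat.mul_ne_zero hα₀v hc)
    omega
  have hd1 : 1 ≤ d := le_trans hwα₀ (Finset.le_sup hα₀)
  -- the top-weight part of f
  set g : MvPolynomial (SymVar n) ℂ :=
    ∑ α ∈ f.support.filter (fun α => wtc c α = d), monomial α (coeff α f) with hgdef
  obtain ⟨αs, hαs, hsups⟩ := Finset.exists_mem_eq_sup f.support ⟨α₀, hα₀⟩ (wtc c)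
  have hαsd : wtc c αs = d := by rw [hddef, hsups]
  have hαsfil : αs ∈ f.support.filter (fun α => wtc c α = d) :=
    Finset.mem_filter.mpr ⟨hαs, hαsd⟩
  have hgcoeff : coeff αs g = coeff αs f := by
    rw [hgdef, MvPolynomial.coeff_sum]
    rw [Finset.sum_congr rfl (fun α _ => MvPolynomial.coeff_monomial αs α (coeff α f))]
    rw [Finset.sum_ite_eq' (f.support.filter (fun α => wtc c α = d)) αs (fun α => coeff α f)]
    simp [hαsfil]
  have hgne : g ≠ 0 := by
    intro h0
    exact (MvPolynomial.mem_support_iff.mp hαs) (by rw [← hgcoeff, h0, MvPolynomial.coeff_zero])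
  -- a generic point where g does not vanish
  have hex : ∃ x : SymVar n → ℂ, MvPolynomial.eval x g ≠ 0 := by
    by_contra hnx
    push_neg at hnx
    exact hgne (MvPolynomial.funext fun x => by rw [hnx x, map_zero])
  obtain ⟨x, hx⟩ := hex
  set B : ℝ := ∑ v : SymVar n, ‖x v‖ with hBdef
  have hBv : ∀ v, ‖x v‖ ≤ B := fun v =>
    Finset.single_le_sum (f := fun u => ‖x u‖)
      (fun u _ => norm_nonneg _) (Finset.mem_univ v)
  have hB0 : 0 ≤ B := Finset.sum_nonneg fun v _ => norm_nonneg _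
  set S₀ : ℝ := ((n : ℝ) + 1) * B + n + 1 with hS₀def
  -- choose a real S > S₀ keeping the top coefficient nonzero
  set q : Polynomial ℂ := MvPolynomial.aeval
    (fun v : SymVar n => Polynomial.C (x v) +
      if v.1.1 = v.1.2 then Polynomial.C Complex.I * Polynomial.X else 0) g with hqdef
  have hq0 : q.eval 0 = MvPolynomial.eval x g := by
    rw [hqdef, eval_aeval_poly]
    have hfun : (fun v : SymVar n => Polynomial.eval 0 (Polynomial.C (x v) +
        if v.1.1 = v.1.2 then Polynomial.C Complex.I * Polynomial.X else 0)) = x := by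
      funext v
      split <;> simp
    rw [hfun]
  have hqne : q ≠ 0 := fun h0 => hx (by rw [← hq0, h0, Polynomial.eval_zero])
  have hgoodinf : ((fun r : ℝ => (r : ℂ)) '' (Set.Ioi S₀)).Infinite :=
    (Set.Ioi_infinite S₀).image (Complex.ofReal_injective.injOn)
  obtain ⟨z, hz⟩ := (hgoodinf.diff (Polynomial.finite_setOf_isRoot hqne)).nonempty
  obtain ⟨⟨S, hS₀S, rfl⟩, hznroot⟩ := hz
  rw [Set.mem_Ioi] at hS₀S
  set m' : SymVar n → ℂ :=
    fun v => x v + if v.1.1 = v.1.2 then Complex.I * S else 0 with hm'def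
  have hm'g : MvPolynomial.eval m' g ≠ 0 := by
    intro h0
    apply hznroot
    simp only [Set.mem_setOf_eq, Polynomial.IsRoot]
    rw [hqdef, eval_aeval_poly, ← h0]
    have hfun : (fun v : SymVar n => Polynomial.eval (S : ℂ) (Polynomial.C (x v) +
        if v.1.1 = v.1.2 then Polynomial.C Complex.I * Polynomial.X else 0)) = m' := by
      funext v
      simp only [hm'def]
      split <;> simp
    rw [hfun]
  -- the univariate polynomial P(t) = f(M_t)
  set P : Polynomial ℂ :=
    MvPolynomial.aeval (fun v => Polynomial.C (m' v) * Polynomial.X ^ c v) f with hPdef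
  have hPcoeff : P.coeff d = MvPolynomial.eval m' g := by
    rw [hPdef, coeff_aeval_weight, hgdef, map_sum]
    refine Finset.sum_congr rfl fun α hα => ?_
    rw [MvPolynomial.eval_monomial]
    rfl
  have hPcoeffne : P.coeff d ≠ 0 := by rw [hPcoeff]; exact hm'g
  have hdeg : 0 < P.degree :=
    Polynomial.natDegree_pos_iff_degree_pos.mp
      (lt_of_lt_of_le hd1 (Polynomial.le_natDegree_of_ne_zero hPcoeffne))
  obtain ⟨τ, hτ⟩ := Complex.exists_root hdeg
  set T : ℝ := ‖τ‖ * B with hTdef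
  have hT0 : 0 ≤ T := mul_nonneg (norm_nonneg _) hB0
  set R : ℝ := (n : ℝ) * T * (T + 1) + 1 with hRdef
  -- the matrix M
  set M : Matrix (Fin n) (Fin n) ℂ := fun a b =>
    if a = k ∧ b = k then Complex.I * R else m' (svar a b) * τ ^ c (svar a b) with hMdef
  have hMoff : ∀ a b, ¬(a = k ∧ b = k) → M a b = m' (svar a b) * τ ^ c (svar a b) := by
    intro a b h
    simp only [hMdef, if_neg h]
  have hMsymm : M.IsSymm := by
    rw [Matrix.IsSymm]
    ext a b
    simp only [Matrix.transpose_apply]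
    by_cases hab : a = k ∧ b = k
    · simp only [hMdef, if_pos hab, if_pos (And.intro hab.2 hab.1)]
    · have hba : ¬(b = k ∧ a = k) := fun h => hab ⟨h.2, h.1⟩
      rw [hMoff b a hba, hMoff a b hab, svar_comm b a]
  -- entry bounds for the imaginary part
  set A : Matrix (Fin n) (Fin n) ℝ := M.map Complex.im with hAdef
  have hAsym : ∀ a b, A a b = A b a := by
    intro a b
    simp only [hAdef, Matrix.map_apply]
    rw [hMsymm.apply]
  have hdiagk : A k k = R := by
    simp only [hAdef, Matrix.map_apply]
    simp [hMdef]
  have hdiag : ∀ a, a ≠ k → A a a = (x (svar a a)).im + S := by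
    intro a ha
    have h1 : ¬(a = k ∧ a = k) := fun h => ha h.1
    simp only [hAdef, Matrix.map_apply, hMoff a a h1]
    have h2 : c (svar a a) = 0 := by
      rw [hcdef, cwt_svar]
      simp [ha]
    rw [h2, pow_zero, mul_one]
    have h3 : (svar a a).1.1 = (svar a a).1.2 := (svar_fst_eq_snd_iff a a).mpr rfl
    simp only [hm'def, if_pos h3]
    simp
  have hoffB : ∀ a b, a ≠ k → b ≠ k → a ≠ b → |A a b| ≤ B := by
    intro a b ha hb hab
    have h1 : ¬(a = k ∧ b = k) := fun h => ha h.1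
    simp only [hAdef, Matrix.map_apply, hMoff a b h1]
    have h2 : c (svar a b) = 0 := by rw [hcdef, cwt_svar]; simp [ha, hb]
    rw [h2, pow_zero, mul_one]
    have h3 : ¬((svar a b).1.1 = (svar a b).1.2) := fun h => hab ((svar_fst_eq_snd_iff a b).mp h)
    simp only [hm'def, if_neg h3, add_zero]
    exact le_trans (Complex.abs_im_le_norm _) (hBv _)
  have hoffT : ∀ a b, a ≠ b → (a = k ∨ b = k) → |A a b| ≤ T := by
    intro a b hab hk
    have h1 : ¬(a = k ∧ b = k) := by
      rintro ⟨rfl, rfl⟩; exact hab rfl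
    simp only [hAdef, Matrix.map_apply, hMoff a b h1]
    have h2 : c (svar a b) = 1 := by
      rw [hcdef, cwt_svar]
      rcases hk with h | h
      · have hbk : b ≠ k := fun hbk => h1 ⟨h, hbk⟩
        simp [h, hbk]
      · have hak : a ≠ k := fun hak => h1 ⟨hak, h⟩
        simp [h, hak]
    rw [h2, pow_one]
    have h3 : ¬((svar a b).1.1 = (svar a b).1.2) := fun h => hab ((svar_fst_eq_snd_iff a b).mp h)
    simp only [hm'def, if_neg h3, add_zero]
    calc |(x (svar a b) * τ).im| ≤ ‖x (svar a b) * τ‖ := Complex.abs_im_le_norm _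
      _ = ‖x (svar a b)‖ * ‖τ‖ := by rw [norm_mul]
      _ ≤ B * ‖τ‖ := by
          exact mul_le_mul_of_nonneg_right (hBv _) (norm_nonneg _)
      _ = T := by rw [hTdef]; ring
  -- positive definiteness
  have hPD : A.PosDef := by
    refine posDef_of_dominant A hAsym (fun a => if a = k then (T + 1)⁻¹ else 1) (fun a => ?_) ?_
    · show 0 < if a = k then (T + 1)⁻¹ else 1
      by_cases h : a = k
      · rw [if_pos h]
        exact inv_pos.mpr (by linarith)
      · rw [if_neg h]
        exact one_pos
    · intro a
      show (∑ b ∈ Finset.univ.erase a, |A a b| * (if b = k then (T + 1)⁻¹ else 1))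
        < A a a * (if a = k then (T + 1)⁻¹ else 1)
      by_cases hak : a = k
      · subst hak
        have hrow : ∀ b ∈ Finset.univ.erase a, |A a b| * (if b = a then (T + 1)⁻¹ else 1) ≤ T := by
          intro b hb
          have hba : b ≠ a := Finset.ne_of_mem_erase hb
          rw [if_neg hba]
          rw [mul_one]
          exact hoffT a b (Ne.symm hba) (Or.inl rfl)
        calc ∑ b ∈ Finset.univ.erase a, |A a b| * (if b = a then (T + 1)⁻¹ else 1)
            ≤ ∑ _b ∈ Finset.univ.erase a, T := Finset.sum_le_sum hrow
          _ = ((Finset.univ.erase a).card : ℝ) * T := by rw [Finset.sum_const, nsmul_eq_mul]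
          _ ≤ (n : ℝ) * T := by
              refine mul_le_mul_of_nonneg_right ?_ hT0
              have := Finset.card_erase_le (a := a) (s := (Finset.univ : Finset (Fin n)))
              calc ((Finset.univ.erase a).card : ℝ) ≤ ((Finset.univ : Finset (Fin n)).card : ℝ) := by
                    exact_mod_cast this
                _ = (n : ℝ) := by simp
          _ < A a a * (if a = a then (T + 1)⁻¹ else 1) := by
              rw [if_pos rfl, hdiagk, ← div_eq_mul_inv,
                lt_div_iff₀ (by linarith : (0:ℝ) < T + 1), hRdef]
              linarith
      · have hrow : ∀ b ∈ Finset.univ.erase a, |A a b| * (if b = k then (T + 1)⁻¹ else 1) ≤ B + 1 := by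
          intro b hb
          have hba : b ≠ a := Finset.ne_of_mem_erase hb
          by_cases hbk : b = k
          · rw [if_pos hbk]
            have h1 : |A a b| ≤ T := hoffT a b (Ne.symm hba) (Or.inr hbk)
            have h2 : |A a b| * (T + 1)⁻¹ ≤ T * (T + 1)⁻¹ := by
              exact mul_le_mul_of_nonneg_right h1 (by positivity)
            have h3 : T * (T + 1)⁻¹ ≤ 1 := by
              rw [← div_eq_mul_inv, div_le_one (by linarith)]
              linarith
            linarith
          · rw [if_neg hbk, mul_one]
            have := hoffB a b hak hbk (Ne.symm hba)
            linarith
        calc ∑ b ∈ Finset.univ.erase a, |A a b| * (if b = k then (T + 1)⁻¹ else 1)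
            ≤ ∑ _b ∈ Finset.univ.erase a, (B + 1) := Finset.sum_le_sum hrow
          _ = ((Finset.univ.erase a).card : ℝ) * (B + 1) := by
              rw [Finset.sum_const, nsmul_eq_mul]
          _ ≤ (n : ℝ) * (B + 1) := by
              refine mul_le_mul_of_nonneg_right ?_ (by linarith)
              have := Finset.card_erase_le (a := a) (s := (Finset.univ : Finset (Fin n)))
              calc ((Finset.univ.erase a).card : ℝ) ≤ ((Finset.univ : Finset (Fin n)).card : ℝ) := by
                    exact_mod_cast this
                _ = (n : ℝ) := by simp
          _ < A a a * (if a = k then (T + 1)⁻¹ else 1) := by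
              rw [if_neg hak, mul_one, hdiag a hak]
              have him : -B ≤ (x (svar a a)).im := by
                have := Complex.abs_im_le_norm (x (svar a a))
                have := hBv (svar a a)
                cases abs_le.mp (le_trans (Complex.abs_im_le_norm _) (hBv (svar a a))) with
                | intro h1 h2 => linarith
              rw [hS₀def] at hS₀S
              nlinarith
  -- evaluation gives zero, contradiction
  have heval : evalMat M f = P.eval τ := by
    rw [hPdef, eval_aeval_poly]
    unfold evalMat
    refine eval_congr_support f _ _ fun v hvocc => ?_
    have hvne : ¬(v.1.1 = k ∧ v.1.2 = k) := by
      rintro ⟨h1, h2⟩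
      have hveq : v = ⟨(k, k), le_refl k⟩ := Subtype.ext (Prod.ext h1 h2)
      obtain ⟨α, hα, hαv⟩ := hvocc
      exact hαv (hveq ▸ hno α hα)
    rw [hMoff _ _ hvne, svar_self v]
    simp
  have hzero : evalMat M f = 0 := by rw [heval]; exact hτ
  exact hf M hMsymm hPD hzero

end Main

/-- If an off-diagonal variable `z_ij` (with `i < j`) occurs in a psd-stable
polynomial `f`, then the diagonal variables `z_ii` and `z_jj` also occur in `f`. -/
theorem offdiag_occurs_implies_diag_occurs {n : ℕ} (f : MvPolynomial (SymVar n) ℂ)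
    (hf : PsdStable f) (i j : Fin n) (hij : i < j)
    (hoccur : ∃ α ∈ f.support, α ⟨(i, j), le_of_lt hij⟩ ≠ 0) :
    (∃ α ∈ f.support, α ⟨(i, i), le_refl i⟩ ≠ 0) ∧
    (∃ α ∈ f.support, α ⟨(j, j), le_refl j⟩ ≠ 0) := by
  constructor
  · refine diag_occurs f hf i ⟨(i, j), le_of_lt hij⟩ ?_ hoccur
    simp [cwt]
  · refine diag_occurs f hf j ⟨(i, j), le_of_lt hij⟩ ?_ hoccur
    simp [cwt]
end

section
/- Let f(Z) = c_α Z^α + c_β Z^β be a psd-stable binomial (c_α, c_β ≠ 0, α ≠ β) in the entries of a symmetric n×n matrix of variables Z, such that the two monomials Z^α and Z^β have no common factor. Then either both monomials involve only diagonal variables, or one of them involves only diagonal variables and the other only off-diagonal variables. -/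
open MvPolynomial

/-- A monomial (recorded by its exponent function) involves only diagonal variables. -/
def DiagOnly {n : ℕ} (α : SymVar n →₀ ℕ) : Prop :=
  ∀ v : SymVar n, α v ≠ 0 → v.1.1 = v.1.2

/-- A monomial (recorded by its exponent function) involves only off-diagonal variables. -/
def OffOnly {n : ℕ} (α : SymVar n →₀ ℕ) : Prop :=
  ∀ v : SymVar n, α v ≠ 0 → v.1.1 ≠ v.1.2

open Matrix

noncomputable def mkMat {n : ℕ} (g : SymVar n → ℂ) : Matrix (Fin n) (Fin n) ℂ :=
  fun i j => if h : i ≤ j then g ⟨(i, j), h⟩ else g ⟨(j, i), le_of_not_ge h⟩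

lemma mkMat_isSymm {n : ℕ} (g : SymVar n → ℂ) : (mkMat g).IsSymm := by
  ext i j
  simp only [Matrix.transpose_apply, mkMat]
  rcases le_or_gt i j with h | h
  · rcases eq_or_lt_of_le h with rfl | h'
    · simp
    · rw [dif_neg (not_le.mpr h'), dif_pos h]
  · rw [dif_pos h.le, dif_neg (not_le.mpr h)]

lemma mkMat_apply_le {n : ℕ} (g : SymVar n → ℂ) {i j : Fin n} (h : i ≤ j) :
    mkMat g i j = g ⟨(i, j), h⟩ := dif_pos h

lemma evalMat_mkMat {n : ℕ} (g : SymVar n → ℂ) (f : MvPolynomial (SymVar n) ℂ) :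
    evalMat (mkMat g) f = eval g f := by
  unfold evalMat
  have : (fun v : SymVar n => mkMat g v.1.1 v.1.2) = g :=
    funext fun v => mkMat_apply_le g v.2
  rw [this]

lemma prod_single_point {n : ℕ} (γ : SymVar n →₀ ℕ) (c : ℂ) (u : SymVar n) :
    (γ.prod fun v k => (if v = u then c else 1) ^ k) = c ^ γ u := by
  classical
  rw [Finsupp.prod]
  by_cases hu : u ∈ γ.support
  · rw [Finset.prod_eq_single u (fun b _ hb => by simp [hb]) (fun h => absurd hu h)]
    simp
  · rw [Finset.prod_eq_one fun b hb => by
      have hbu : b ≠ u := by rintro rfl; exact hu hb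
      simp [hbu]]
    have : γ u = 0 := Finsupp.notMem_support_iff.mp hu
    simp [this]

lemma posDef_aux {n : ℕ} (d : Fin n → ℝ) (hd : ∀ i, 1 ≤ d i) (i0 j0 : Fin n)
    (hij : i0 ≠ j0) (ε : ℝ) (hε : |ε| ≤ 1/2) :
    Matrix.PosDef (fun i j =>
      (if j = i then d i else 0) + (if i = i0 ∧ j = j0 then ε else 0)
        + (if i = j0 ∧ j = i0 then ε else 0) : Matrix (Fin n) (Fin n) ℝ) := by
  set A : Matrix (Fin n) (Fin n) ℝ := fun i j =>
      (if j = i then d i else 0) + (if i = i0 ∧ j = j0 then ε else 0)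
        + (if i = j0 ∧ j = i0 then ε else 0) with hA
  rw [Matrix.posDef_iff_dotProduct_mulVec]
  constructor
  · ext i j
    simp only [Matrix.conjTranspose_apply, star_trivial]
    simp only [hA]
    by_cases h : i = j
    · subst h; rfl
    · rw [if_neg h, if_neg (fun hh : j = i => h hh.symm), zero_add, zero_add, add_comm]
      congr 1 <;> · apply if_congr _ rfl rfl; exact and_comm
  · intro x hx
    have row : ∀ i, (A *ᵥ x) i
        = d i * x i + (if i = i0 then ε * x j0 else 0) + (if i = j0 then ε * x i0 else 0) := by
      intro i
      show ∑ j, A i j * x j = _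
      by_cases hi1 : i = i0
      · have hi2 : ¬ i = j0 := fun h => hij (hi1 ▸ h ▸ rfl : i0 = j0)
        have e : ∀ j, A i j * x j
            = (if j = i then d i * x j else 0) + (if j = j0 then ε * x j else 0) := by
          intro j
          simp [hA, hi1, hi2, add_mul, ite_mul, hij, hij.symm]
        rw [Finset.sum_congr rfl fun j _ => e j]
        simp [Finset.sum_add_distrib, Finset.sum_ite_eq', hi1, hi2, hij, hij.symm]
      · by_cases hi2 : i = j0
        · have e : ∀ j, A i j * x j
              = (if j = i then d i * x j else 0) + (if j = i0 then ε * x j else 0) := by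
            intro j
            simp [hA, hi1, hi2, add_mul, ite_mul, hij, hij.symm]
          rw [Finset.sum_congr rfl fun j _ => e j]
          simp [Finset.sum_add_distrib, Finset.sum_ite_eq', hi1, hi2, hij, hij.symm]
        · have e : ∀ j, A i j * x j = (if j = i then d i * x j else 0) := by
            intro j
            simp [hA, hi1, hi2, add_mul, ite_mul, hij, hij.symm]
          rw [Finset.sum_congr rfl fun j _ => e j]
          simp [Finset.sum_ite_eq', hi1, hi2]
    have key : dotProduct x (A *ᵥ x)
        = (∑ i, d i * x i ^ 2) + ε * x i0 * x j0 + ε * x j0 * x i0 := by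
      simp only [dotProduct, row, mul_add, Finset.sum_add_distrib, mul_ite, mul_zero,
        Finset.sum_ite_eq', Finset.mem_univ, if_true]
      congr 1
      · congr 1
        · apply Finset.sum_congr rfl; intro i _; ring
        · ring
      · ring
    simp only [star_trivial]
    rw [key]
    have hS : 0 < ∑ i, x i ^ 2 := by
      have : ∃ i, x i ≠ 0 := by
        by_contra hc; push_neg at hc; exact hx (funext hc)
      obtain ⟨i, hi⟩ := this
      exact Finset.sum_pos' (fun j _ => sq_nonneg _) ⟨i, Finset.mem_univ i, by positivity⟩
    have h1 : ∑ i, x i ^ 2 ≤ ∑ i, d i * x i ^ 2 := by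
      apply Finset.sum_le_sum; intro i _
      nlinarith [hd i, sq_nonneg (x i)]
    have h2 : x i0 ^ 2 + x j0 ^ 2 ≤ ∑ i, x i ^ 2 := by
      have := Finset.sum_le_sum_of_subset_of_nonneg
        (Finset.subset_univ {i0, j0}) (fun i _ _ => sq_nonneg (x i))
      rwa [Finset.sum_pair hij] at this
    have h3 : -(1/2) * (x i0 ^ 2 + x j0 ^ 2) ≤ ε * x i0 * x j0 + ε * x j0 * x i0 := by
      rcases abs_le.mp hε with ⟨hl, hr⟩
      nlinarith [sq_nonneg (x i0 + x j0), sq_nonneg (x i0 - x j0)]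
    linarith

lemma master {n : ℕ} (α β : SymVar n →₀ ℕ) (cα cβ : ℂ) (hcα : cα ≠ 0) (hcβ : cβ ≠ 0)
    (u q : SymVar n) (hu : u.1.1 ≠ u.1.2) (hαu : α u ≠ 0) (hβu : β u = 0) (hqu : q ≠ u)
    (hq : (α q = 0 ∧ β q ≠ 0 ∧ q.1.1 ≠ q.1.2) ∨ (β q = 0 ∧ α q ≠ 0)) :
    ¬ PsdStable (monomial α cα + monomial β cβ) := by
  classical
  intro hst
  set base : SymVar n → ℂ := fun v => if v.1.1 = v.1.2 then Complex.I else 1 with hbase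
  have hbase_ne : ∀ v, base v ≠ 0 := by
    intro v; simp only [hbase]; split
    · exact Complex.I_ne_zero
    · exact one_ne_zero
  set Bα : ℂ := α.prod fun v k => base v ^ k with hBαdef
  set Bβ : ℂ := β.prod fun v k => base v ^ k with hBβdef
  have hBα : Bα ≠ 0 := by
    rw [hBαdef, Finsupp.prod]
    exact Finset.prod_ne_zero_iff.mpr fun v _ => pow_ne_zero _ (hbase_ne v)
  have hBβ : Bβ ≠ 0 := by
    rw [hBβdef, Finsupp.prod]
    exact Finset.prod_ne_zero_iff.mpr fun v _ => pow_ne_zero _ (hbase_ne v)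
  set C : ℂ := -(cβ * Bβ) / (cα * Bα) with hCdef
  have hcαBα : cα * Bα ≠ 0 := mul_ne_zero hcα hBα
  have hC : C ≠ 0 := by
    rw [hCdef]
    exact div_ne_zero (neg_ne_zero.mpr (mul_ne_zero hcβ hBβ)) hcαBα
  have hCabs : 0 < ‖C‖ := by
    simpa using (norm_pos_iff.mpr hC)
  -- unified choice of s and w
  obtain ⟨s, hs_pos, hs_diag, w, hw_small, hkey⟩ :
      ∃ s : ℝ, 0 < s ∧ (q.1.1 = q.1.2 → 1 ≤ s) ∧ ∃ w : ℂ,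
        ‖w‖ ≤ (1/2) ^ (α u) ∧
        cα * Bα * (w * (s:ℂ) ^ (α q)) + cβ * Bβ * (s:ℂ) ^ (β q) = 0 := by
    have hCkey : cα * Bα * C = -(cβ * Bβ) := by
      rw [hCdef, mul_div_cancel₀ _ hcαBα]
    rcases hq with ⟨hαq, hβq, hqoff⟩ | ⟨hβq, hαq⟩
    · set t : ℝ := max 1 (2 ^ (α u) * ‖C‖) with ht
      have ht1 : (1:ℝ) ≤ t := le_max_left _ _
      have ht0 : (0:ℝ) < t := lt_of_lt_of_le one_pos ht1
      refine ⟨t⁻¹, by positivity, fun h => absurd h hqoff,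
        C * ((t⁻¹ : ℝ):ℂ) ^ (β q), ?_, ?_⟩
      · rw [norm_mul, norm_pow, Complex.norm_real, Real.norm_eq_abs, abs_of_pos (by positivity)]
        have h1 : t⁻¹ ^ (β q) ≤ t⁻¹ :=
          pow_le_of_le_one (by positivity) (inv_le_one_of_one_le₀ ht1) hβq
        have h2 : t⁻¹ ≤ (2 ^ (α u) * ‖C‖)⁻¹ :=
          inv_anti₀ (by positivity) (le_max_right _ _)
        calc ‖C‖ * t⁻¹ ^ (β q) ≤ ‖C‖ * (2 ^ (α u) * ‖C‖)⁻¹ := by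
              apply mul_le_mul_of_nonneg_left (h1.trans h2) hCabs.le
          _ = (2 ^ (α u))⁻¹ := by field_simp
          _ = (1/2) ^ (α u) := by rw [one_div, inv_pow]
      · rw [hαq]
        push_cast
        ring_nf
        linear_combination ((t:ℂ)⁻¹) ^ (β q) * hCkey
    · set t : ℝ := max 1 (2 ^ (α u) * ‖C‖) with ht
      have ht1 : (1:ℝ) ≤ t := le_max_left _ _
      have ht0 : (0:ℝ) < t := lt_of_lt_of_le one_pos ht1
      have htc : ((t:ℝ):ℂ) ^ (α q) ≠ 0 := pow_ne_zero _ (by exact_mod_cast ht0.ne')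
      refine ⟨t, ht0, fun _ => ht1, C / ((t : ℝ):ℂ) ^ (α q), ?_, ?_⟩
      · rw [norm_div, norm_pow, Complex.norm_real, Real.norm_eq_abs, abs_of_pos ht0]
        have h1 : t ≤ t ^ (α q) := le_self_pow₀ ht1 hαq
        have h2 : 2 ^ (α u) * ‖C‖ ≤ t ^ (α q) :=
          (le_max_right _ _).trans h1
        rw [div_le_iff₀ (by positivity)]
        calc ‖C‖ = (1/2) ^ (α u) * (2 ^ (α u) * ‖C‖) := by
              rw [one_div, inv_pow, ← mul_assoc, inv_mul_cancel₀ (by positivity), one_mul]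
          _ ≤ (1/2) ^ (α u) * t ^ (α q) := by
              apply mul_le_mul_of_nonneg_left h2 (by positivity)
      · rw [hβq, div_mul_cancel₀ _ htc]
        push_cast
        linear_combination hCkey
  -- the root
  obtain ⟨z, hz⟩ := IsAlgClosed.exists_pow_nat_eq w (Nat.pos_of_ne_zero hαu)
  have hzabs : ‖z‖ ≤ 1/2 := by
    apply le_of_pow_le_pow_left₀ hαu (by norm_num : (0:ℝ) ≤ 1/2)
    rw [← norm_pow, hz]
    exact hw_small
  -- the assignment
  set g : SymVar n → ℂ :=
    fun v => (if v = u then z else 1) * (if v = q then ((s:ℝ):ℂ) else 1) * base v with hg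
  -- the product formula
  have hprod : ∀ γ : SymVar n →₀ ℕ,
      (γ.prod fun v k => g v ^ k)
        = z ^ γ u * ((s:ℝ):ℂ) ^ γ q * γ.prod fun v k => base v ^ k := by
    intro γ
    have : (γ.prod fun v k => g v ^ k)
        = γ.prod fun v k =>
            (if v = u then z else 1) ^ k * ((if v = q then ((s:ℝ):ℂ) else 1) ^ k * base v ^ k) := by
      apply Finsupp.prod_congr
      intro v _
      rw [hg]; ring
    rw [this, Finsupp.prod_mul, Finsupp.prod_mul, prod_single_point, prod_single_point, mul_assoc]
  -- evaluation is zero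
  have heval : evalMat (mkMat g) (monomial α cα + monomial β cβ) = 0 := by
    rw [evalMat_mkMat, map_add, eval_monomial, eval_monomial, hprod, hprod, hβu, hz]
    rw [← hBαdef, ← hBβdef]
    rw [pow_zero, one_mul]
    linear_combination hkey
  -- positive definiteness
  have him : ((mkMat g).map Complex.im).PosDef := by
    have hd : ∀ i : Fin n, (1:ℝ) ≤ (g ⟨(i, i), le_refl i⟩).im := by
      intro i
      set v : SymVar n := ⟨(i, i), le_refl i⟩ with hv
      have hvu : v ≠ u := by
        intro h; exact hu (by rw [← h])
      have hvd : v.1.1 = v.1.2 := rfl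
      rw [hg]
      simp only [if_neg hvu, hbase, if_pos hvd, one_mul]
      by_cases hvq : v = q
      · rw [if_pos hvq]
        have : (((s:ℝ):ℂ) * Complex.I).im = s := by simp
        rw [this]
        exact hs_diag (hvq ▸ hvd)
      · rw [if_neg hvq, one_mul, Complex.I_im]
    have hεle : |z.im| ≤ 1/2 := le_trans (Complex.abs_im_le_norm z) hzabs
    have hmain := posDef_aux (fun i => (g ⟨(i, i), le_refl i⟩).im) hd u.1.1 u.1.2 hu z.im hεle
    have hmeq : ((mkMat g).map Complex.im) = fun i j =>
        (if j = i then (g ⟨(i, i), le_refl i⟩).im else 0)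
          + (if i = u.1.1 ∧ j = u.1.2 then z.im else 0)
          + (if i = u.1.2 ∧ j = u.1.1 then z.im else 0) := by
      have hu_lt : u.1.1 < u.1.2 := lt_of_le_of_ne u.2 hu
      funext i j
      simp only [Matrix.map_apply]
      by_cases hij : i = j
      · subst hij
        rw [mkMat_apply_le g (le_refl i), if_pos rfl]
        have h1 : ¬(i = u.1.1 ∧ i = u.1.2) := fun h => hu (h.1 ▸ h.2 ▸ rfl)
        have h2 : ¬(i = u.1.2 ∧ i = u.1.1) := fun h => hu (h.2 ▸ h.1 ▸ rfl)
        rw [if_neg h1, if_neg h2, add_zero, add_zero]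
      · rw [if_neg (fun h : j = i => hij h.symm), zero_add]
        rcases Ne.lt_or_gt hij with hlt | hgt
        · rw [mkMat_apply_le g hlt.le]
          set v : SymVar n := ⟨(i, j), hlt.le⟩ with hv
          have hvd : ¬ v.1.1 = v.1.2 := hij
          have h2 : ¬(i = u.1.2 ∧ j = u.1.1) := by
            rintro ⟨h1, h2⟩
            exact absurd (h1 ▸ h2 ▸ hlt) (lt_asymm hu_lt)
          rw [if_neg h2, add_zero]
          by_cases hvu : v = u
          · have hcond : i = u.1.1 ∧ j = u.1.2 := by
              rw [← hvu]; exact ⟨rfl, rfl⟩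
            rw [if_pos hcond, hg]
            have hvq : v ≠ q := fun h => hqu (h ▸ hvu ▸ rfl : q = u)
            simp only [if_pos hvu, if_neg hvq, hbase, if_neg hvd, mul_one, one_mul]
          · have hcond : ¬(i = u.1.1 ∧ j = u.1.2) := by
              rintro ⟨h1, h2⟩
              exact hvu (Subtype.ext (Prod.ext h1 h2))
            rw [if_neg hcond, hg]
            simp only [if_neg hvu, hbase, if_neg hvd, mul_one, one_mul]
            by_cases hvq : v = q <;> simp [hvq]
        · have hm : mkMat g i j = g ⟨(j, i), hgt.le⟩ := dif_neg (not_le.mpr hgt)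
          rw [hm]
          set v : SymVar n := ⟨(j, i), hgt.le⟩ with hv
          have hvd : ¬ v.1.1 = v.1.2 := fun h => hij h.symm
          have h1 : ¬(i = u.1.1 ∧ j = u.1.2) := by
            rintro ⟨h1, h2⟩
            exact absurd (h1 ▸ h2 ▸ hgt) (lt_asymm hu_lt)
          rw [if_neg h1, zero_add]
          by_cases hvu : v = u
          · have hcond : i = u.1.2 ∧ j = u.1.1 := by
              rw [← hvu]; exact ⟨rfl, rfl⟩
            rw [if_pos hcond, hg]
            have hvq : v ≠ q := fun h => hqu (h ▸ hvu ▸ rfl : q = u)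
            simp only [if_pos hvu, if_neg hvq, hbase, if_neg hvd, mul_one, one_mul]
          · have hcond : ¬(i = u.1.2 ∧ j = u.1.1) := by
              rintro ⟨h1, h2⟩
              exact hvu (Subtype.ext (Prod.ext h2 h1))
            rw [if_neg hcond, hg]
            simp only [if_neg hvu, hbase, if_neg hvd, mul_one, one_mul]
            by_cases hvq : v = q <;> simp [hvq]
    rw [hmeq]
    exact hmain
  exact hst (mkMat g) (mkMat_isSymm g) him heval

/-- In a psd-stable binomial whose two monomials have no common factor, either
both monomials involve only diagonal variables, or one involves only diagonal
and the other only off-diagonal variables. -/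
theorem psdStable_binomial_structure {n : ℕ} (α β : SymVar n →₀ ℕ)
    (cα cβ : ℂ) (hcα : cα ≠ 0) (hcβ : cβ ≠ 0) (hne : α ≠ β)
    (hnc : ∀ v : SymVar n, α v = 0 ∨ β v = 0)
    (hf : PsdStable (monomial α cα + monomial β cβ)) :
    (DiagOnly α ∧ DiagOnly β) ∨ (DiagOnly α ∧ OffOnly β) ∨
      (OffOnly α ∧ DiagOnly β) := by
  by_contra hcon
  rw [not_or, not_or] at hcon
  obtain ⟨h1, h2, h3⟩ := hcon
  by_cases hDα : DiagOnly α
  · have hβ1 : ¬ DiagOnly β := fun h => h1 ⟨hDα, h⟩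
    have hβ2 : ¬ OffOnly β := fun h => h2 ⟨hDα, h⟩
    unfold DiagOnly at hβ1
    unfold OffOnly at hβ2
    push_neg at hβ1 hβ2
    obtain ⟨u, hβu, huoff⟩ := hβ1
    obtain ⟨p, hβp, hpd⟩ := hβ2
    have hαu : α u = 0 := (hnc u).resolve_right hβu
    have hαp : α p = 0 := (hnc p).resolve_right hβp
    have hpu : p ≠ u := fun h => huoff (h ▸ hpd)
    have hf' : PsdStable (monomial β cβ + monomial α cα) := by
      rwa [add_comm] at hf
    exact master β α cβ cα hcβ hcα u p huoff hβu hαu hpu (Or.inr ⟨hαp, hβp⟩) hf'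
  · unfold DiagOnly at hDα
    push_neg at hDα
    obtain ⟨u, hαu, huoff⟩ := hDα
    have hβu : β u = 0 := (hnc u).resolve_left hαu
    by_cases hDβ : DiagOnly β
    · have hα2 : ¬ OffOnly α := fun h => h3 ⟨h, hDβ⟩
      unfold OffOnly at hα2
      push_neg at hα2
      obtain ⟨p, hαp, hpd⟩ := hα2
      have hβp : β p = 0 := (hnc p).resolve_left hαp
      have hpu : p ≠ u := fun h => huoff (h ▸ hpd)
      exact master α β cα cβ hcα hcβ u p huoff hαu hβu hpu (Or.inr ⟨hβp, hαp⟩) hf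
    · unfold DiagOnly at hDβ
      push_neg at hDβ
      obtain ⟨w, hβw, hwoff⟩ := hDβ
      have hαw : α w = 0 := (hnc w).resolve_right hβw
      have hwu : w ≠ u := fun h => hβw (h ▸ hβu)
      exact master α β cα cβ hcα hcβ u w huoff hαu hβu hwu (Or.inl ⟨hαw, hβw, hwoff⟩) hf
end
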